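/- arXiv:2010.11331 — 8 statements merged into one kernel-verified Lean document; each statement's English description precedes it below -/
import Mathlib

section
/- Let f ∈ L¹(𝕋²), v ∈ ℤ² \ {0} and k ∈ ℤ². Then I_v f ∈ L¹(𝕋²) and its Fourier coefficient at k satisfies: \widehat{I_v f}(k) = f̂(k) if k·v = 0, and \widehat{I_v f}(k) = 0 if k·v ≠ 0. -/
noncomputable section
open MeasureTheory Real
open scoped ENNReal NNReal

instance : Fact ((0:ℝ) < 1) := ⟨one_pos⟩

/-- The flat torus `𝕋ⁿ = ℝⁿ/ℤⁿ`, with the probability Haar (Lebesgue) measure. -/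
abbrev Torus (n : ℕ) := Fin n → AddCircle (1:ℝ)

/-- The quotient map `π : ℝⁿ → 𝕋ⁿ`. -/
def tmap {n : ℕ} (x : Fin n → ℝ) : Torus n := fun i => (x i : AddCircle (1:ℝ))

/-- The character `x ↦ e^{2πi k·x}` on the torus. -/
def char {n : ℕ} (k : Fin n → ℤ) (x : Torus n) : ℂ := ∏ i, fourier (k i) (x i)

/-- The Fourier coefficient `f̂(k) = ∫ f(x) e^{−2πi k·x} dx`. -/
def fCoeff {n : ℕ} (f : Torus n → ℂ) (k : Fin n → ℤ) : ℂ := ∫ x, char (-k) x * f x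

/-- The X-ray transform on `𝕋²` in direction `v ∈ ℤ² \ {0}`:
`I_v f(x) = ∫₀¹ f(x + t v) dt`. -/
def xray (v : Fin 2 → ℤ) (f : Torus 2 → ℂ) (x : Torus 2) : ℂ :=
  ∫ t in (0:ℝ)..1, f (x + tmap fun i => t * (v i : ℝ))

/- ### Auxiliary lemmas -/

lemma fourier_arg_add {n : ℤ} (a b : AddCircle (1:ℝ)) :
    fourier n (a + b) = fourier n a * fourier n b := by
  simp_rw [fourier_apply, smul_add, AddCircle.toCircle_add, Circle.coe_mul]

lemma char_add' {n : ℕ} (k : Fin n → ℤ) (x y : Torus n) :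
    char k (x + y) = char k x * char k y := by
  unfold char
  rw [← Finset.prod_mul_distrib]
  exact Finset.prod_congr rfl fun i _ => fourier_arg_add _ _

lemma char_continuous {n : ℕ} (k : Fin n → ℤ) : Continuous (char k) :=
  continuous_finset_prod _ fun i _ => ((fourier (k i)).continuous).comp (continuous_apply i)

lemma char_norm {n : ℕ} (k : Fin n → ℤ) (x : Torus n) : ‖char k x‖ = 1 := by
  unfold char
  rw [norm_prod]
  refine Finset.prod_eq_one fun i _ => ?_
  rw [fourier_apply]
  exact Circle.norm_coe _

theorem xray_integrable_and_fourierCoeff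
    (f : Torus 2 → ℂ) (hf : Integrable f (volume : Measure (Torus 2)))
    (v : Fin 2 → ℤ) (hv : v ≠ 0) (k : Fin 2 → ℤ) :
    Integrable (xray v f) (volume : Measure (Torus 2)) ∧
    ((∑ i, k i * v i) = 0 → fCoeff (xray v f) k = fCoeff f k) ∧
    ((∑ i, k i * v i) ≠ 0 → fCoeff (xray v f) k = 0) := by
  set ν : Measure ℝ := volume.restrict (Set.Ioc (0:ℝ) 1) with hν
  haveI : IsProbabilityMeasure ν := ⟨by simp [hν, Real.volume_Ioc]⟩
  set τ : ℝ → Torus 2 := fun t => tmap (fun i => t * (v i : ℝ)) with hτ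
  have hτc : Continuous τ := by
    refine continuous_pi fun i => ?_
    exact (AddCircle.continuous_mk' 1).comp (continuous_id.mul continuous_const)
  have hS : MeasurePreserving (fun p : ℝ × Torus 2 => (p.1, p.2 + τ p.1))
      (ν.prod volume) (ν.prod volume) := by
    refine MeasurePreserving.skew_product (g := fun t x => x + τ t)
      (MeasurePreserving.id ν) ?_ (ae_of_all _ fun t => ?_)
    · exact measurable_snd.add (hτc.measurable.comp measurable_fst)
    · exact map_add_right_eq_self volume (τ t)
  have hsnd : MeasurePreserving (Prod.snd : ℝ × Torus 2 → Torus 2) (ν.prod volume) volume :=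
    ⟨measurable_snd, by rw [Measure.map_snd_prod, measure_univ, one_smul]⟩
  have h2 : Integrable (fun p : ℝ × Torus 2 => f p.2) (ν.prod volume) :=
    (hsnd.integrable_comp hf.1).2 hf
  have H : Integrable (fun p : ℝ × Torus 2 => f (p.2 + τ p.1)) (ν.prod volume) :=
    (hS.integrable_comp h2.1).2 h2
  have hxray : ∀ x : Torus 2, xray v f x = ∫ t, f (x + τ t) ∂ν := fun x =>
    intervalIntegral.integral_of_le zero_le_one
  have hIx : Integrable (xray v f) (volume : Measure (Torus 2)) :=
    H.integral_prod_right.congr (Filter.Eventually.of_forall fun x => (hxray x).symm)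
  set m : ℤ := ∑ i, k i * v i with hm
  have hchar_t : ∀ t : ℝ, char (-k) (-(τ t))
      = Complex.exp (2 * (π:ℂ) * Complex.I * (m:ℂ) * t) := by
    intro t
    have h1 : ∀ i : Fin 2, fourier ((-k) i) ((-(τ t)) i)
        = Complex.exp (2 * (π:ℂ) * Complex.I * ((k i * v i : ℤ) : ℂ) * t) := by
      intro i
      have h2 : (-(τ t)) i = ((-(t * (v i : ℝ)) : ℝ) : AddCircle (1:ℝ)) := rfl
      have h3 : ((-k) i) = -(k i) := rfl
      rw [h2, h3, fourier_coe_apply]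
      congr 1
      push_cast
      ring
    calc char (-k) (-(τ t))
        = ∏ i, Complex.exp (2 * (π:ℂ) * Complex.I * ((k i * v i : ℤ) : ℂ) * t) :=
          Finset.prod_congr rfl fun i _ => h1 i
      _ = Complex.exp (∑ i, 2 * (π:ℂ) * Complex.I * ((k i * v i : ℤ) : ℂ) * t) :=
          (Complex.exp_sum _ _).symm
      _ = Complex.exp (2 * (π:ℂ) * Complex.I * (m:ℂ) * t) := by
          congr 1
          rw [hm]
          push_cast
          rw [← Finset.sum_mul, ← Finset.mul_sum]
  have hInner : ∀ t : ℝ, (∫ x, char (-k) x * f (x + τ t) ∂(volume : Measure (Torus 2)))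
      = Complex.exp (2 * (π:ℂ) * Complex.I * (m:ℂ) * t) * fCoeff f k := by
    intro t
    have h1 : (∫ x, char (-k) x * f (x + τ t) ∂(volume : Measure (Torus 2)))
        = ∫ x, char (-k) (x + -(τ t)) * f (x + -(τ t) + τ t) ∂(volume : Measure (Torus 2)) :=
      (integral_add_right_eq_self (fun x => char (-k) x * f (x + τ t)) (-(τ t))).symm
    rw [h1]
    have h2 : (fun x : Torus 2 => char (-k) (x + -(τ t)) * f (x + -(τ t) + τ t))
        = fun x : Torus 2 => char (-k) (-(τ t)) * (char (-k) x * f x) := by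
      funext x
      rw [neg_add_cancel_right, char_add']
      ring
    rw [h2, integral_const_mul, hchar_t t]
    rfl
  have hG : Integrable (fun p : Torus 2 × ℝ => char (-k) p.1 * f (p.1 + τ p.2))
      ((volume : Measure (Torus 2)).prod ν) := by
    refine Integrable.bdd_mul H.swap ?_ (c := 1) (ae_of_all _ fun p => le_of_eq (char_norm _ _))
    exact ((char_continuous (-k)).comp continuous_fst).aestronglyMeasurable
  have hkey : fCoeff (xray v f) k
      = (∫ t, Complex.exp (2 * (π:ℂ) * Complex.I * (m:ℂ) * t) ∂ν) * fCoeff f k := by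
    calc fCoeff (xray v f) k
        = ∫ x, ∫ t, char (-k) x * f (x + τ t) ∂ν ∂(volume : Measure (Torus 2)) := by
          refine integral_congr_ae (ae_of_all _ fun x => ?_)
          dsimp only
          rw [hxray x, integral_const_mul]
      _ = ∫ t, ∫ x, char (-k) x * f (x + τ t) ∂(volume : Measure (Torus 2)) ∂ν :=
          integral_integral_swap hG
      _ = ∫ t, Complex.exp (2 * (π:ℂ) * Complex.I * (m:ℂ) * t) * fCoeff f k ∂ν :=
          integral_congr_ae (ae_of_all _ fun t => hInner t)
      _ = (∫ t, Complex.exp (2 * (π:ℂ) * Complex.I * (m:ℂ) * t) ∂ν) * fCoeff f k :=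
          integral_mul_const _ _
  refine ⟨hIx, fun h0 => ?_, fun h0 => ?_⟩
  · rw [hkey]
    have : m = 0 := h0
    simp [this]
  · rw [hkey]
    have hmne : m ≠ 0 := h0
    have hcne : (2 * (π:ℂ) * Complex.I * (m:ℂ)) ≠ 0 := by
      refine mul_ne_zero (mul_ne_zero (mul_ne_zero two_ne_zero ?_) Complex.I_ne_zero) ?_
      · exact_mod_cast Real.pi_ne_zero
      · exact_mod_cast hmne
    have hJ : (∫ t, Complex.exp (2 * (π:ℂ) * Complex.I * (m:ℂ) * t) ∂ν) = 0 := by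
      have := integral_exp_mul_complex (a := 0) (b := 1) hcne
      rw [hν, ← intervalIntegral.integral_of_le zero_le_one, this,
        show (2 * (π:ℂ) * Complex.I * (m:ℂ)) * ((1:ℝ):ℂ) = (m:ℂ) * (2 * (π:ℂ) * Complex.I) by
          push_cast; ring,
        Complex.exp_int_mul_two_pi_mul_I]
      simp
    rw [hJ, zero_mul]
end
end

section
/- Let f ∈ L¹(𝕋²), k = (k₁,k₂) ∈ ℤ² and v ∈ ℤ² \ {0} with k·v = 0. If k₂ ≠ 0, then the function y ↦ I_v f(π(0,y)) is defined for a.e. y ∈ [0,1] and is integrable, and f̂(k) = ∫₀¹ I_v f(π(0,y)) e^{−2πi k₂ y} dy. Similarly, if k₁ ≠ 0, then the function x ↦ I_v f(π(x,0)) is defined for a.e. x ∈ [0,1] and is integrable, and f̂(k) = ∫₀¹ I_v f(π(x,0)) e^{−2πi k₁ x} dx. -/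
noncomputable section
open MeasureTheory Real
open scoped ENNReal NNReal

namespace XrayAux

open Set MeasureTheory.Measure

local notation "𝕊" => AddCircle (1:ℝ)

lemma smul_coe (a : ℤ) (t : ℝ) : a • ((t : ℝ) : 𝕊) = (((a : ℝ) * t : ℝ) : 𝕊) := by
  rw [← QuotientAddGroup.mk_zsmul, zsmul_eq_mul]

lemma char_neg_tmap (k : Fin 2 → ℤ) (w : Fin 2 → ℝ) :
    char (-k) (tmap w) =
      Complex.exp (-(2 * (π:ℂ) * Complex.I) * ((k 0 : ℂ) * (w 0 : ℂ) + (k 1 : ℂ) * (w 1 : ℂ))) := by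
  simp only [char, Fin.prod_univ_two, Pi.neg_apply, tmap]
  rw [fourier_coe_apply, fourier_coe_apply, ← Complex.exp_add]
  congr 1
  push_cast
  ring

lemma core (g : 𝕊 × 𝕊 → ℂ)
    (hg : Integrable g ((volume : Measure 𝕊).prod volume)) (a b : ℤ) (ha : a ≠ 0) :
    Integrable (fun u : ℝ => ∫ t in Ioc (0:ℝ) 1,
        g (a • ((t : ℝ) : 𝕊), ((u : ℝ) : 𝕊) + b • ((t : ℝ) : 𝕊)))
      (volume.restrict (Ioc (0:ℝ) 1)) ∧
    (∫ p, g p ∂((volume : Measure 𝕊).prod volume))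
      = ∫ u in Ioc (0:ℝ) 1, ∫ t in Ioc (0:ℝ) 1,
          g (a • ((t : ℝ) : 𝕊), ((u : ℝ) : 𝕊) + b • ((t : ℝ) : 𝕊)) := by
  have hmk : MeasurePreserving ((↑) : ℝ → 𝕊) (volume.restrict (Ioc (0:ℝ) 1)) volume := by
    simpa using AddCircle.measurePreserving_mk (1:ℝ) 0
  have hskew : MeasurePreserving (fun p : 𝕊 × 𝕊 => (a • p.1, p.2 + b • p.1))
      ((volume : Measure 𝕊).prod volume) ((volume : Measure 𝕊).prod volume) :=
    MeasurePreserving.skew_product (g := fun x y => y + b • x)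
      (measurePreserving_zsmul volume ha)
      ((continuous_snd.add ((continuous_zsmul b).comp continuous_fst)).measurable)
      (Filter.Eventually.of_forall fun x => map_add_right_eq_self volume (b • x))
  have hΨ : MeasurePreserving
      (fun p : ℝ × ℝ => (a • ((p.1 : ℝ) : 𝕊), ((p.2 : ℝ) : 𝕊) + b • ((p.1 : ℝ) : 𝕊)))
      ((volume.restrict (Ioc (0:ℝ) 1)).prod (volume.restrict (Ioc (0:ℝ) 1)))
      ((volume : Measure 𝕊).prod volume) := hskew.comp (hmk.prod hmk)
  have hG : Integrable
      (fun p : ℝ × ℝ => g (a • ((p.1 : ℝ) : 𝕊), ((p.2 : ℝ) : 𝕊) + b • ((p.1 : ℝ) : 𝕊)))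
      ((volume.restrict (Ioc (0:ℝ) 1)).prod (volume.restrict (Ioc (0:ℝ) 1))) := by
    have := (hΨ.integrable_comp hg.aestronglyMeasurable).mpr hg
    exact this
  refine ⟨hG.integral_prod_right, ?_⟩
  have h1 : ∫ p, g p ∂((volume : Measure 𝕊).prod volume)
      = ∫ p : ℝ × ℝ, g (a • ((p.1 : ℝ) : 𝕊), ((p.2 : ℝ) : 𝕊) + b • ((p.1 : ℝ) : 𝕊))
          ∂((volume.restrict (Ioc (0:ℝ) 1)).prod (volume.restrict (Ioc (0:ℝ) 1))) := by
    rw [← hΨ.map_eq]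
    exact integral_map hΨ.aemeasurable (by rw [hΨ.map_eq]; exact hg.aestronglyMeasurable)
  rw [h1]
  exact integral_prod_symm _ hG


lemma char_case1 (k v : Fin 2 → ℤ) (hkv : (∑ i, k i * v i) = 0) (t u : ℝ) :
    char (-k) (tmap ![(v 0 : ℝ) * t, u + (v 1 : ℝ) * t])
      = Complex.exp (-2 * (π : ℂ) * Complex.I * ((k 1 : ℤ) : ℂ) * (u : ℂ)) := by
  rw [char_neg_tmap]
  have hkv' : k 0 * v 0 + k 1 * v 1 = 0 := by rwa [Fin.sum_univ_two] at hkv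
  have h : (k 0 : ℂ) * (v 0 : ℂ) + (k 1 : ℂ) * (v 1 : ℂ) = 0 := by exact_mod_cast hkv'
  simp only [Matrix.cons_val_zero, Matrix.cons_val_one, Matrix.head_cons]
  congr 1
  push_cast
  linear_combination (-(2 * (π : ℂ) * Complex.I) * (t : ℂ)) * h

lemma char_case2 (k v : Fin 2 → ℤ) (hkv : (∑ i, k i * v i) = 0) (t u : ℝ) :
    char (-k) (tmap ![u + (v 0 : ℝ) * t, (v 1 : ℝ) * t])
      = Complex.exp (-2 * (π : ℂ) * Complex.I * ((k 0 : ℤ) : ℂ) * (u : ℂ)) := by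
  rw [char_neg_tmap]
  have hkv' : k 0 * v 0 + k 1 * v 1 = 0 := by rwa [Fin.sum_univ_two] at hkv
  have h : (k 0 : ℂ) * (v 0 : ℂ) + (k 1 : ℂ) * (v 1 : ℂ) = 0 := by exact_mod_cast hkv'
  simp only [Matrix.cons_val_zero, Matrix.cons_val_one, Matrix.head_cons]
  congr 1
  push_cast
  linear_combination (-(2 * (π : ℂ) * Complex.I) * (t : ℂ)) * h

lemma vec_eq_tmap (x y : ℝ) : (![((x : ℝ) : 𝕊), ((y : ℝ) : 𝕊)] : Torus 2) = tmap ![x, y] := by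
  funext i; fin_cases i <;> rfl

lemma hvec1 (v : Fin 2 → ℤ) (t u : ℝ) :
    (![(v 0 : ℤ) • ((t : ℝ) : 𝕊), ((u : ℝ) : 𝕊) + (v 1 : ℤ) • ((t : ℝ) : 𝕊)] : Torus 2)
      = tmap ![(v 0 : ℝ) * t, u + (v 1 : ℝ) * t] := by
  funext i
  fin_cases i
  · show (v 0 : ℤ) • ((t : ℝ) : 𝕊) = (((v 0 : ℝ) * t : ℝ) : 𝕊)
    rw [smul_coe]
  · show ((u : ℝ) : 𝕊) + (v 1 : ℤ) • ((t : ℝ) : 𝕊) = ((u + (v 1 : ℝ) * t : ℝ) : 𝕊)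
    rw [smul_coe, ← QuotientAddGroup.mk_add]

lemma hvec2 (v : Fin 2 → ℤ) (t u : ℝ) :
    (![((u : ℝ) : 𝕊) + (v 0 : ℤ) • ((t : ℝ) : 𝕊), (v 1 : ℤ) • ((t : ℝ) : 𝕊)] : Torus 2)
      = tmap ![u + (v 0 : ℝ) * t, (v 1 : ℝ) * t] := by
  funext i
  fin_cases i
  · show ((u : ℝ) : 𝕊) + (v 0 : ℤ) • ((t : ℝ) : 𝕊) = ((u + (v 0 : ℝ) * t : ℝ) : 𝕊)
    rw [smul_coe, ← QuotientAddGroup.mk_add]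
  · show (v 1 : ℤ) • ((t : ℝ) : 𝕊) = (((v 1 : ℝ) * t : ℝ) : 𝕊)
    rw [smul_coe]

lemma tmap_shift1 (v : Fin 2 → ℤ) (t u : ℝ) :
    tmap ![0, u] + (tmap fun i => t * (v i : ℝ))
      = tmap ![(v 0 : ℝ) * t, u + (v 1 : ℝ) * t] := by
  funext i
  fin_cases i
  · show ((0 : ℝ) : 𝕊) + ((t * (v 0 : ℝ) : ℝ) : 𝕊) = (((v 0 : ℝ) * t : ℝ) : 𝕊)
    rw [← QuotientAddGroup.mk_add]
    congr 1
    ring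
  · show ((u : ℝ) : 𝕊) + ((t * (v 1 : ℝ) : ℝ) : 𝕊) = ((u + (v 1 : ℝ) * t : ℝ) : 𝕊)
    rw [← QuotientAddGroup.mk_add]
    congr 1
    ring

lemma tmap_shift2 (v : Fin 2 → ℤ) (t u : ℝ) :
    tmap ![u, 0] + (tmap fun i => t * (v i : ℝ))
      = tmap ![u + (v 0 : ℝ) * t, (v 1 : ℝ) * t] := by
  funext i
  fin_cases i
  · show ((u : ℝ) : 𝕊) + ((t * (v 0 : ℝ) : ℝ) : 𝕊) = ((u + (v 0 : ℝ) * t : ℝ) : 𝕊)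
    rw [← QuotientAddGroup.mk_add]
    congr 1
    ring
  · show ((0 : ℝ) : 𝕊) + ((t * (v 1 : ℝ) : ℝ) : 𝕊) = (((v 1 : ℝ) * t : ℝ) : 𝕊)
    rw [← QuotientAddGroup.mk_add]
    congr 1
    ring


lemma char_cont (k : Fin 2 → ℤ) : Continuous (char k) := by
  unfold char
  exact continuous_finset_prod _ fun i _ => (map_continuous (fourier (k i))).comp (continuous_apply i)

lemma char_norm_le (k : Fin 2 → ℤ) (x : Torus 2) : ‖char k x‖ ≤ 1 := by
  unfold char
  rw [norm_prod]
  apply le_of_eq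
  rw [Fin.prod_univ_two]
  have h0 : ‖(fourier (k 0) (x 0) : ℂ)‖ = 1 := Circle.norm_coe _
  have h1 : ‖(fourier (k 1) (x 1) : ℂ)‖ = 1 := Circle.norm_coe _
  rw [h0, h1, mul_one]

lemma c_integrable (f : Torus 2 → ℂ) (hf : Integrable f (volume : Measure (Torus 2)))
    (k : Fin 2 → ℤ) :
    Integrable (fun x => char (-k) x * f x) (volume : Measure (Torus 2)) :=
  hf.bdd_mul (char_cont (-k)).aestronglyMeasurable (c := 1) (Filter.Eventually.of_forall (char_norm_le (-k)))

lemma arr1_mp : MeasurePreserving (fun p : 𝕊 × 𝕊 => (![p.1, p.2] : Torus 2))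
    ((volume : Measure 𝕊).prod volume) (volume : Measure (Torus 2)) := by
  have h := (volume_preserving_finTwoArrow 𝕊).symm _
  have he : ⇑(MeasurableEquiv.finTwoArrow (α := 𝕊)).symm = fun p : 𝕊 × 𝕊 => (![p.1, p.2] : Torus 2) := by
    funext p
    funext i
    fin_cases i <;> rfl
  rwa [he] at h

lemma arr2_mp : MeasurePreserving (fun p : 𝕊 × 𝕊 => (![p.2, p.1] : Torus 2))
    ((volume : Measure 𝕊).prod volume) (volume : Measure (Torus 2)) := by
  have h := arr1_mp.comp (measurePreserving_swap (μ := (volume : Measure 𝕊)) (ν := volume))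
  have he : ((fun p : 𝕊 × 𝕊 => (![p.1, p.2] : Torus 2)) ∘ Prod.swap)
      = fun p : 𝕊 × 𝕊 => (![p.2, p.1] : Torus 2) := rfl
  rwa [he] at h

lemma transfer (c : Torus 2 → ℂ) (hc : Integrable c (volume : Measure (Torus 2)))
    (arr : 𝕊 × 𝕊 → Torus 2)
    (harr : MeasurePreserving arr ((volume : Measure 𝕊).prod volume) (volume : Measure (Torus 2))) :
    Integrable (fun p : 𝕊 × 𝕊 => c (arr p)) ((volume : Measure 𝕊).prod volume) ∧
    (∫ x, c x) = ∫ p, c (arr p) ∂((volume : Measure 𝕊).prod volume) := by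
  constructor
  · have := (harr.integrable_comp hc.aestronglyMeasurable).mpr hc
    exact this
  · rw [← harr.map_eq]
    exact integral_map harr.aemeasurable (by rw [harr.map_eq]; exact hc.aestronglyMeasurable)


lemma case1 (f : Torus 2 → ℂ) (hf : Integrable f (volume : Measure (Torus 2)))
    (k v : Fin 2 → ℤ) (hkv : (∑ i, k i * v i) = 0) (ha : v 0 ≠ 0) :
    IntervalIntegrable (fun y : ℝ => xray v f (tmap ![0, y])) volume 0 1 ∧
    fCoeff f k = ∫ y in (0:ℝ)..1,
      xray v f (tmap ![0, y]) * Complex.exp (-2 * (π : ℂ) * Complex.I * ((k 1 : ℤ) : ℂ) * (y : ℂ)) := by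
  have hc := c_integrable f hf k
  obtain ⟨hgInt, hgEq⟩ := transfer _ hc _ arr1_mp
  obtain ⟨hfInt, -⟩ := transfer f hf _ arr1_mp
  obtain ⟨hJ1, -⟩ := core _ hfInt (v 0) (v 1) ha
  obtain ⟨-, hI2⟩ := core _ hgInt (v 0) (v 1) ha
  have hfvec : ∀ u t : ℝ,
      f (![(v 0 : ℤ) • ((t : ℝ) : 𝕊), ((u : ℝ) : 𝕊) + (v 1 : ℤ) • ((t : ℝ) : 𝕊)] : Torus 2)
        = f (tmap ![(v 0 : ℝ) * t, u + (v 1 : ℝ) * t]) := fun u t => by rw [hvec1 v t u]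
  have hg2 : ∀ u t : ℝ,
      char (-k) (![(v 0 : ℤ) • ((t : ℝ) : 𝕊), ((u : ℝ) : 𝕊) + (v 1 : ℤ) • ((t : ℝ) : 𝕊)] : Torus 2)
        * f (![(v 0 : ℤ) • ((t : ℝ) : 𝕊), ((u : ℝ) : 𝕊) + (v 1 : ℤ) • ((t : ℝ) : 𝕊)] : Torus 2)
      = Complex.exp (-2 * (π : ℂ) * Complex.I * ((k 1 : ℤ) : ℂ) * (u : ℂ))
          * f (tmap ![(v 0 : ℝ) * t, u + (v 1 : ℝ) * t]) := by
    intro u t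
    rw [hvec1 v t u, char_case1 k v hkv t u]
  have hxr : ∀ u : ℝ, (∫ t in Ioc (0:ℝ) 1, f (tmap ![(v 0 : ℝ) * t, u + (v 1 : ℝ) * t]))
      = xray v f (tmap ![0, u]) := by
    intro u
    rw [xray, intervalIntegral.integral_of_le zero_le_one]
    exact integral_congr_ae (Filter.Eventually.of_forall fun t =>
      (congrArg f (tmap_shift1 v t u)).symm)
  constructor
  · rw [intervalIntegrable_iff, Set.uIoc_of_le zero_le_one]
    refine hJ1.congr (Filter.Eventually.of_forall fun u => ?_)
    simp only [hfvec u]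
    exact hxr u
  · have heq : fCoeff f k = ∫ u in Ioc (0:ℝ) 1,
        xray v f (tmap ![0, u])
          * Complex.exp (-2 * (π : ℂ) * Complex.I * ((k 1 : ℤ) : ℂ) * (u : ℂ)) := by
      show (∫ x, char (-k) x * f x) = _
      rw [hgEq, hI2]
      refine integral_congr_ae (Filter.Eventually.of_forall fun u => ?_)
      simp only [hg2 u]
      rw [MeasureTheory.integral_const_mul, hxr u]
      exact mul_comm _ _
    rw [intervalIntegral.integral_of_le zero_le_one]
    exact heq

lemma case2 (f : Torus 2 → ℂ) (hf : Integrable f (volume : Measure (Torus 2)))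
    (k v : Fin 2 → ℤ) (hkv : (∑ i, k i * v i) = 0) (ha : v 1 ≠ 0) :
    IntervalIntegrable (fun x : ℝ => xray v f (tmap ![x, 0])) volume 0 1 ∧
    fCoeff f k = ∫ x in (0:ℝ)..1,
      xray v f (tmap ![x, 0]) * Complex.exp (-2 * (π : ℂ) * Complex.I * ((k 0 : ℤ) : ℂ) * (x : ℂ)) := by
  have hc := c_integrable f hf k
  obtain ⟨hgInt, hgEq⟩ := transfer _ hc _ arr2_mp
  obtain ⟨hfInt, -⟩ := transfer f hf _ arr2_mp
  obtain ⟨hJ1, -⟩ := core _ hfInt (v 1) (v 0) ha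
  obtain ⟨-, hI2⟩ := core _ hgInt (v 1) (v 0) ha
  have hfvec : ∀ u t : ℝ,
      f (![((u : ℝ) : 𝕊) + (v 0 : ℤ) • ((t : ℝ) : 𝕊), (v 1 : ℤ) • ((t : ℝ) : 𝕊)] : Torus 2)
        = f (tmap ![u + (v 0 : ℝ) * t, (v 1 : ℝ) * t]) := fun u t => by rw [hvec2 v t u]
  have hg2 : ∀ u t : ℝ,
      char (-k) (![((u : ℝ) : 𝕊) + (v 0 : ℤ) • ((t : ℝ) : 𝕊), (v 1 : ℤ) • ((t : ℝ) : 𝕊)] : Torus 2)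
        * f (![((u : ℝ) : 𝕊) + (v 0 : ℤ) • ((t : ℝ) : 𝕊), (v 1 : ℤ) • ((t : ℝ) : 𝕊)] : Torus 2)
      = Complex.exp (-2 * (π : ℂ) * Complex.I * ((k 0 : ℤ) : ℂ) * (u : ℂ))
          * f (tmap ![u + (v 0 : ℝ) * t, (v 1 : ℝ) * t]) := by
    intro u t
    rw [hvec2 v t u, char_case2 k v hkv t u]
  have hxr : ∀ u : ℝ, (∫ t in Ioc (0:ℝ) 1, f (tmap ![u + (v 0 : ℝ) * t, (v 1 : ℝ) * t]))
      = xray v f (tmap ![u, 0]) := by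
    intro u
    rw [xray, intervalIntegral.integral_of_le zero_le_one]
    exact integral_congr_ae (Filter.Eventually.of_forall fun t =>
      (congrArg f (tmap_shift2 v t u)).symm)
  constructor
  · rw [intervalIntegrable_iff, Set.uIoc_of_le zero_le_one]
    refine hJ1.congr (Filter.Eventually.of_forall fun u => ?_)
    simp only [hfvec u]
    exact hxr u
  · have heq : fCoeff f k = ∫ u in Ioc (0:ℝ) 1,
        xray v f (tmap ![u, 0])
          * Complex.exp (-2 * (π : ℂ) * Complex.I * ((k 0 : ℤ) : ℂ) * (u : ℂ)) := by
      show (∫ x, char (-k) x * f x) = _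
      rw [hgEq, hI2]
      refine integral_congr_ae (Filter.Eventually.of_forall fun u => ?_)
      simp only [hg2 u]
      rw [MeasureTheory.integral_const_mul, hxr u]
      exact mul_comm _ _
    rw [intervalIntegral.integral_of_le zero_le_one]
    exact heq

end XrayAux

theorem fourierCoeff_eq_intervalIntegral_xray
    (f : Torus 2 → ℂ) (hf : Integrable f (volume : Measure (Torus 2)))
    (k v : Fin 2 → ℤ) (hv : v ≠ 0) (hkv : (∑ i, k i * v i) = 0) :
    (k 1 ≠ 0 →
      IntervalIntegrable (fun y : ℝ => xray v f (tmap ![0, y])) volume 0 1 ∧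
      fCoeff f k = ∫ y in (0:ℝ)..1,
        xray v f (tmap ![0, y]) * Complex.exp (-2 * (π : ℂ) * Complex.I * ((k 1 : ℤ) : ℂ) * (y : ℂ))) ∧
    (k 0 ≠ 0 →
      IntervalIntegrable (fun x : ℝ => xray v f (tmap ![x, 0])) volume 0 1 ∧
      fCoeff f k = ∫ x in (0:ℝ)..1,
        xray v f (tmap ![x, 0]) * Complex.exp (-2 * (π : ℂ) * Complex.I * ((k 0 : ℤ) : ℂ) * (x : ℂ))) := by
  have hkv2 : k 0 * v 0 + k 1 * v 1 = 0 := by rwa [Fin.sum_univ_two] at hkv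
  constructor
  · intro hk1
    have ha : v 0 ≠ 0 := by
      intro h0
      rw [h0, mul_zero, zero_add, mul_eq_zero] at hkv2
      rcases hkv2 with h | h
      · exact hk1 h
      · exact hv (funext fun i => by fin_cases i <;> simp [h0, h])
    exact XrayAux.case1 f hf k v hkv ha
  · intro hk0
    have ha : v 1 ≠ 0 := by
      intro h1
      rw [h1, mul_zero, add_zero, mul_eq_zero] at hkv2
      rcases hkv2 with h | h
      · exact hk0 h
      · exact hv (funext fun i => by fin_cases i <;> simp [h1, h])
    exact XrayAux.case2 f hf k v hkv ha
end
end

section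
/- Let r ∈ ℝ, s ≥ r, and α > 0, and suppose g ∈ H^r(𝕋² × Q). Then the function f₀ = P^{s−r}_α I* g, i.e. the sequence with f₀(k) = (1 + α⟨k⟩^{2(s−r)})^{−1} (I* g)(k), belongs to H^{2s−r}(𝕋²) ⊂ H^s(𝕋²), and f₀ is the unique minimizer over f ∈ H^r(𝕋²) of the Tikhonov functional ‖I f − g‖²_{H^r(𝕋²×Q)} + α ‖f‖²_{H^s(𝕋²)} (the functional being interpreted as +∞ when f ∉ H^s(𝕋²)). -/
noncomputable section
open scoped ENNReal NNReal

/-- `⟨k⟩² = 1 + |k|²` for `k ∈ ℤ²`. -/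
def nrmSq (k : Fin 2 → ℤ) : ℝ := 1 + ((k 0 : ℝ)^2 + (k 1 : ℝ)^2)

/-- The dot product on `ℤ²`. -/
def dotZ (k v : Fin 2 → ℤ) : ℤ := ∑ i, k i * v i

/-- The X-ray transform acting on Fourier coefficient sequences:
`(I a)(k,v) = a k` if `k ⊥ v` and `0` otherwise. -/
def IaQ (Q : Set (Fin 2 → ℤ)) (a : (Fin 2 → ℤ) → ℂ) (k : Fin 2 → ℤ) (v : Q) : ℂ :=
  if dotZ k v.1 = 0 then a k else 0

/-- The adjoint `I*` of the X-ray transform, on Fourier coefficient sequences: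
`(I* g)(k) = g(k, v_k)` (for `k = 0`, `g(0, ·)` is constant so the choice `vk 0` is immaterial). -/
def Istar (Q : Set (Fin 2 → ℤ)) (vk : (Fin 2 → ℤ) → Q)
    (g : (Fin 2 → ℤ) → Q → ℂ) (k : Fin 2 → ℤ) : ℂ :=
  g k (vk k)

/-- The squared `H^s(𝕋²)` norm of a Fourier coefficient sequence
(`ℝ≥0∞`-valued, `∞` when the sequence is not in `H^s`):
`‖a‖² = Σ_k ⟨k⟩^{2s} |a k|²`. -/
def hsNormSq (s : ℝ) (a : (Fin 2 → ℤ) → ℂ) : ℝ≥0∞ :=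
  ∑' k : Fin 2 → ℤ, ENNReal.ofReal (nrmSq k ^ s * ‖a k‖ ^ 2)

/-- The squared `H^s(𝕋² × Q)` norm:
`‖g‖² = |g(0,0)|² + Σ_{k ≠ 0} Σ_{v ∈ Q} ⟨k⟩^{2s} |g(k,v)|²`. -/
def hsQNormSq (s : ℝ) (Q : Set (Fin 2 → ℤ)) (vk : (Fin 2 → ℤ) → Q)
    (g : (Fin 2 → ℤ) → Q → ℂ) : ℝ≥0∞ :=
  ENNReal.ofReal (‖g 0 (vk 0)‖ ^ 2) +
    ∑' (k : {k : Fin 2 → ℤ // k ≠ 0}) (v : Q),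
      ENNReal.ofReal (nrmSq k.1 ^ s * ‖g k.1 v‖ ^ 2)

/-- The inner product generating the `H^s(𝕋²)` norm. -/
def hsInner (s : ℝ) (a b : (Fin 2 → ℤ) → ℂ) : ℂ :=
  ∑' k : Fin 2 → ℤ, (Complex.ofReal (nrmSq k ^ s)) * (a k * (starRingEnd ℂ) (b k))

/-- The inner product generating the `H^s(𝕋² × Q)` norm. -/
def hsQInner (s : ℝ) (Q : Set (Fin 2 → ℤ)) (vk : (Fin 2 → ℤ) → Q)
    (g h : (Fin 2 → ℤ) → Q → ℂ) : ℂ :=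
  g 0 (vk 0) * (starRingEnd ℂ) (h 0 (vk 0)) +
    ∑' (k : {k : Fin 2 → ℤ // k ≠ 0}) (v : Q),
      (Complex.ofReal (nrmSq k.1 ^ s)) * (g k.1 v * (starRingEnd ℂ) (h k.1 v))

/-- The Fourier multiplier `P^β_α`, `(P^β_α a)(k) = (1 + α ⟨k⟩^{2β})⁻¹ a(k)`. -/
def Pmul (β : ℝ) (α : ℝ) (a : (Fin 2 → ℤ) → ℂ) (k : Fin 2 → ℤ) : ℂ :=
  (Complex.ofReal (1 + α * nrmSq k ^ β))⁻¹ * a k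
lemma quadId (c d : ℝ) (hc : 0 < c) (hd : 0 < d) (b z : ℂ) :
    c * ‖z - b‖^2 + d * ‖z‖^2
      = (c * ‖(↑(c/(c+d)) : ℂ) * b - b‖^2 + d * ‖(↑(c/(c+d)) : ℂ) * b‖^2)
        + (c+d) * ‖z - (↑(c/(c+d)) : ℂ) * b‖^2 := by
  have hcd : c + d ≠ 0 := by positivity
  simp only [Complex.sq_norm]
  simp only [Complex.sq_norm, Complex.normSq_apply, Complex.sub_re, Complex.sub_im,
    Complex.mul_re, Complex.mul_im, Complex.ofReal_re, Complex.ofReal_im]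
  field_simp
  ring

lemma tsum_split_zero (F : (Fin 2 → ℤ) → ℝ≥0∞) :
    ∑' k, F k = F 0 + ∑' k : {k : Fin 2 → ℤ // k ≠ 0}, F k.1 := by
  classical
  rw [ENNReal.tsum_eq_add_tsum_ite 0]
  congr 1
  refine Eq.trans (tsum_congr ?_) ((tsum_subtype {k : Fin 2 → ℤ | k ≠ 0} F).symm)
  intro k
  by_cases h : k = 0 <;> simp [Set.indicator, h]

theorem tikhonov_minimizer
    (r s α : ℝ) (hs : r ≤ s) (hα : 0 < α)
    (Q : Set (Fin 2 → ℤ))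
    (hQ0 : ∀ v ∈ Q, v ≠ 0)
    (hQ : ∀ v : Fin 2 → ℤ, v ≠ 0 → ∃! q, q ∈ Q ∧ ∃ m : ℤ, v = m • q)
    (vk : (Fin 2 → ℤ) → Q)
    (hvk : ∀ k : Fin 2 → ℤ, k ≠ 0 →
      dotZ k (vk k).1 = 0 ∧ ∀ v : Q, dotZ k v.1 = 0 → v = vk k)
    (g : (Fin 2 → ℤ) → Q → ℂ)
    (hg0 : ∀ v w : Q, g 0 v = g 0 w)
    (hg : hsQNormSq r Q vk g < ⊤) :
    hsNormSq (2*s - r) (Pmul (s - r) α (Istar Q vk g)) < ⊤ ∧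
    hsNormSq s (Pmul (s - r) α (Istar Q vk g)) < ⊤ ∧
    ∀ f : (Fin 2 → ℤ) → ℂ, f ≠ Pmul (s - r) α (Istar Q vk g) →
      hsQNormSq r Q vk (fun k v => IaQ Q (Pmul (s - r) α (Istar Q vk g)) k v - g k v) +
          ENNReal.ofReal α * hsNormSq s (Pmul (s - r) α (Istar Q vk g))
        < hsQNormSq r Q vk (fun k v => IaQ Q f k v - g k v) +
            ENNReal.ofReal α * hsNormSq s f := by
  classical
  set b : (Fin 2 → ℤ) → ℂ := fun k => g k (vk k) with hbdef
  set f₀ : (Fin 2 → ℤ) → ℂ := Pmul (s - r) α (Istar Q vk g) with hf₀def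
  have hf₀ : ∀ k, f₀ k = (Complex.ofReal (1 + α * nrmSq k ^ (s-r)))⁻¹ * b k := fun k => rfl
  have hm1 : ∀ k, (1:ℝ) ≤ nrmSq k := by
    intro k
    have : (0:ℝ) ≤ (k 0 : ℝ)^2 + (k 1 : ℝ)^2 := by positivity
    unfold nrmSq; linarith
  have hmp : ∀ k, (0:ℝ) < nrmSq k := fun k => lt_of_lt_of_le one_pos (hm1 k)
  have hrp : ∀ (x : ℝ) k, (0:ℝ) < nrmSq k ^ x := fun x k => Real.rpow_pos_of_pos (hmp k) x
  have hm0 : nrmSq 0 = 1 := by simp [nrmSq]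
  have hden : ∀ k, (0:ℝ) < 1 + α * nrmSq k ^ (s-r) := by
    intro k
    have := hrp (s-r) k
    nlinarith
  -- split of the `v`-sum
  have hinner : ∀ (f : (Fin 2 → ℤ) → ℂ) (k : {k : Fin 2 → ℤ // k ≠ 0}),
      (∑' v : Q, ENNReal.ofReal (nrmSq k.1 ^ r * ‖IaQ Q f k.1 v - g k.1 v‖ ^ 2))
        = ENNReal.ofReal (nrmSq k.1 ^ r * ‖f k.1 - b k.1‖ ^ 2)
          + ∑' v : Q, (if v = vk k.1 then 0
              else ENNReal.ofReal (nrmSq k.1 ^ r * ‖g k.1 v‖ ^ 2)) := by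
    intro f k
    rw [ENNReal.tsum_eq_add_tsum_ite (vk k.1)]
    have h1 : IaQ Q f k.1 (vk k.1) - g k.1 (vk k.1) = f k.1 - b k.1 := by
      simp [IaQ, (hvk k.1 k.2).1, hbdef]
    rw [h1]
    congr 1
    apply tsum_congr; intro v
    by_cases hv : v = vk k.1
    · simp [hv]
    · have hdot : dotZ k.1 v.1 ≠ 0 := fun h => hv ((hvk k.1 k.2).2 v h)
      simp [hv, IaQ, hdot]
  set R : ℝ≥0∞ := ∑' (k : {k : Fin 2 → ℤ // k ≠ 0}) (v : Q),
      (if v = vk k.1 then 0 else ENNReal.ofReal (nrmSq k.1 ^ r * ‖g k.1 v‖ ^ 2)) with hRdef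
  have hd00 : dotZ 0 (vk 0).1 = 0 := by simp [dotZ]
  -- decomposition of the functional
  have hJ : ∀ f : (Fin 2 → ℤ) → ℂ,
      hsQNormSq r Q vk (fun k v => IaQ Q f k v - g k v) + ENNReal.ofReal α * hsNormSq s f
        = R + ∑' k, ENNReal.ofReal
            (nrmSq k ^ r * ‖f k - b k‖ ^ 2 + α * nrmSq k ^ s * ‖f k‖ ^ 2) := by
    intro f
    have e1 : hsQNormSq r Q vk (fun k v => IaQ Q f k v - g k v)
        = (∑' k, ENNReal.ofReal (nrmSq k ^ r * ‖f k - b k‖ ^ 2)) + R := by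
      unfold hsQNormSq
      rw [tsum_congr (hinner f), ENNReal.tsum_add,
        tsum_split_zero (fun k => ENNReal.ofReal (nrmSq k ^ r * ‖f k - b k‖ ^ 2))]
      have h0 : IaQ Q f 0 (vk 0) - g 0 (vk 0) = f 0 - b 0 := by
        simp [IaQ, hd00, hbdef]
      simp only [h0, hm0, Real.one_rpow, one_mul]
      ring
    have e2 : ENNReal.ofReal α * hsNormSq s f
        = ∑' k, ENNReal.ofReal (α * nrmSq k ^ s * ‖f k‖ ^ 2) := by
      unfold hsNormSq
      rw [← ENNReal.tsum_mul_left]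
      apply tsum_congr; intro k
      rw [← ENNReal.ofReal_mul hα.le, mul_assoc]
    have e3 : ∀ k, ENNReal.ofReal
          (nrmSq k ^ r * ‖f k - b k‖ ^ 2 + α * nrmSq k ^ s * ‖f k‖ ^ 2)
        = ENNReal.ofReal (nrmSq k ^ r * ‖f k - b k‖ ^ 2)
          + ENNReal.ofReal (α * nrmSq k ^ s * ‖f k‖ ^ 2) := fun k =>
      ENNReal.ofReal_add
        (mul_nonneg (Real.rpow_nonneg (hmp k).le r) (by positivity))
        (mul_nonneg (mul_nonneg hα.le (Real.rpow_nonneg (hmp k).le s)) (by positivity))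
    rw [e1, e2, tsum_congr e3, ENNReal.tsum_add]
    ring
  -- rpow arithmetic
  have hms : ∀ k, nrmSq k ^ s = nrmSq k ^ r * nrmSq k ^ (s-r) := by
    intro k
    rw [← Real.rpow_add (hmp k)]
    congr 1; ring
  have h2sr : ∀ k, nrmSq k ^ (2*s - r) = nrmSq k ^ r * (nrmSq k ^ (s-r))^2 := by
    intro k
    rw [sq, ← Real.rpow_add (hmp k), ← Real.rpow_add (hmp k)]
    congr 1; ring
  have hfrac : ∀ k, nrmSq k ^ r / (nrmSq k ^ r + α * nrmSq k ^ s)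
      = (1 + α * nrmSq k ^ (s-r))⁻¹ := by
    intro k
    have hu := hrp r k
    have ht := hrp (s-r) k
    rw [hms k, inv_eq_one_div,
      div_eq_div_iff (add_pos hu (mul_pos hα (mul_pos hu ht))).ne' (hden k).ne']
    ring
  -- pointwise quadratic identity
  have hT : ∀ (f : (Fin 2 → ℤ) → ℂ) k,
      nrmSq k ^ r * ‖f k - b k‖ ^ 2 + α * nrmSq k ^ s * ‖f k‖ ^ 2
        = (nrmSq k ^ r * ‖f₀ k - b k‖ ^ 2 + α * nrmSq k ^ s * ‖f₀ k‖ ^ 2)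
          + (nrmSq k ^ r + α * nrmSq k ^ s) * ‖f k - f₀ k‖ ^ 2 := by
    intro f k
    have h := quadId (nrmSq k ^ r) (α * nrmSq k ^ s) (hrp r k)
      (mul_pos hα (hrp s k)) (b k) (f k)
    have hz : (↑(nrmSq k ^ r / (nrmSq k ^ r + α * nrmSq k ^ s)) : ℂ) * b k = f₀ k := by
      rw [hfrac k, Complex.ofReal_inv, hf₀ k]
    rw [hz] at h
    exact h
  -- norm of f₀
  have hnf₀ : ∀ k, ‖f₀ k‖ = (1 + α * nrmSq k ^ (s-r))⁻¹ * ‖b k‖ := by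
    intro k
    rw [hf₀ k, norm_mul, norm_inv, Complex.norm_real, Real.norm_eq_abs,
      abs_of_pos (hden k)]
  -- finiteness of ∑ m^r ‖b‖²
  have hGfin : (∑' k, ENNReal.ofReal (nrmSq k ^ r * ‖b k‖ ^ 2)) < ⊤ := by
    rw [tsum_split_zero]
    refine lt_of_le_of_lt (add_le_add ?_ ?_) hg
    · rw [hm0, Real.one_rpow, one_mul]
    · exact ENNReal.tsum_le_tsum fun k => ENNReal.le_tsum (vk k.1)
  -- pointwise bounds
  have h1 : ∀ k, nrmSq k ^ (s-r) * (1 + α * nrmSq k ^ (s-r))⁻¹ ≤ α⁻¹ := by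
    intro k
    rw [← div_eq_mul_inv, div_le_iff₀ (hden k)]
    have e : α⁻¹ * (1 + α * nrmSq k ^ (s-r)) = α⁻¹ + nrmSq k ^ (s-r) := by
      field_simp
    rw [e]
    have := inv_nonneg.mpr hα.le
    linarith
  have h2 : ∀ k, nrmSq k ^ (s-r) * ((1 + α * nrmSq k ^ (s-r))⁻¹)^2 ≤ α⁻¹ := by
    intro k
    rw [inv_pow, ← div_eq_mul_inv, div_le_iff₀ (pow_pos (hden k) 2)]
    have ht : (0:ℝ) ≤ nrmSq k ^ (s-r) := (hrp (s-r) k).le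
    have key : α * nrmSq k ^ (s-r) ≤ (1 + α * nrmSq k ^ (s-r))^2 := by
      nlinarith [mul_nonneg hα.le ht]
    calc nrmSq k ^ (s-r) = α⁻¹ * (α * nrmSq k ^ (s-r)) := by field_simp
      _ ≤ α⁻¹ * (1 + α * nrmSq k ^ (s-r))^2 :=
          mul_le_mul_of_nonneg_left key (inv_nonneg.mpr hα.le)
  have hB2 : ∀ k, nrmSq k ^ (2*s - r) * ‖f₀ k‖ ^ 2
      ≤ α⁻¹ * α⁻¹ * (nrmSq k ^ r * ‖b k‖ ^ 2) := by
    intro k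
    rw [h2sr k, hnf₀ k]
    have ht0 : (0:ℝ) ≤ nrmSq k ^ (s-r) * (1 + α * nrmSq k ^ (s-r))⁻¹ :=
      mul_nonneg (hrp (s-r) k).le (inv_nonneg.mpr (hden k).le)
    calc nrmSq k ^ r * (nrmSq k ^ (s-r))^2
          * ((1 + α * nrmSq k ^ (s-r))⁻¹ * ‖b k‖)^2
        = (nrmSq k ^ (s-r) * (1 + α * nrmSq k ^ (s-r))⁻¹)^2
            * (nrmSq k ^ r * ‖b k‖^2) := by ring
      _ ≤ (α⁻¹)^2 * (nrmSq k ^ r * ‖b k‖^2) :=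
          mul_le_mul_of_nonneg_right (pow_le_pow_left₀ ht0 (h1 k) 2)
            (mul_nonneg (hrp r k).le (sq_nonneg _))
      _ = α⁻¹ * α⁻¹ * (nrmSq k ^ r * ‖b k‖ ^ 2) := by ring
  have hBs : ∀ k, nrmSq k ^ s * ‖f₀ k‖ ^ 2 ≤ α⁻¹ * (nrmSq k ^ r * ‖b k‖ ^ 2) := by
    intro k
    rw [hms k, hnf₀ k]
    calc nrmSq k ^ r * nrmSq k ^ (s-r) * ((1 + α * nrmSq k ^ (s-r))⁻¹ * ‖b k‖)^2
        = (nrmSq k ^ (s-r) * ((1 + α * nrmSq k ^ (s-r))⁻¹)^2)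
            * (nrmSq k ^ r * ‖b k‖^2) := by ring
      _ ≤ α⁻¹ * (nrmSq k ^ r * ‖b k‖ ^ 2) :=
          mul_le_mul_of_nonneg_right (h2 k) (mul_nonneg (hrp r k).le (sq_nonneg _))
  have claim1 : hsNormSq (2*s - r) f₀ < ⊤ := by
    unfold hsNormSq
    have hnn : (0:ℝ) ≤ α⁻¹ * α⁻¹ :=
      mul_nonneg (inv_nonneg.mpr hα.le) (inv_nonneg.mpr hα.le)
    calc (∑' k, ENNReal.ofReal (nrmSq k ^ (2*s-r) * ‖f₀ k‖ ^ 2))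
        ≤ ∑' k, ENNReal.ofReal (α⁻¹ * α⁻¹ * (nrmSq k ^ r * ‖b k‖ ^ 2)) :=
          ENNReal.tsum_le_tsum fun k => ENNReal.ofReal_le_ofReal (hB2 k)
      _ = ENNReal.ofReal (α⁻¹ * α⁻¹) * ∑' k, ENNReal.ofReal (nrmSq k ^ r * ‖b k‖ ^ 2) := by
          rw [← ENNReal.tsum_mul_left]
          exact tsum_congr fun k => ENNReal.ofReal_mul hnn
      _ < ⊤ := ENNReal.mul_lt_top ENNReal.ofReal_lt_top hGfin
  have claim2 : hsNormSq s f₀ < ⊤ := by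
    unfold hsNormSq
    calc (∑' k, ENNReal.ofReal (nrmSq k ^ s * ‖f₀ k‖ ^ 2))
        ≤ ∑' k, ENNReal.ofReal (α⁻¹ * (nrmSq k ^ r * ‖b k‖ ^ 2)) :=
          ENNReal.tsum_le_tsum fun k => ENNReal.ofReal_le_ofReal (hBs k)
      _ = ENNReal.ofReal α⁻¹ * ∑' k, ENNReal.ofReal (nrmSq k ^ r * ‖b k‖ ^ 2) := by
          rw [← ENNReal.tsum_mul_left]
          exact tsum_congr fun k => ENNReal.ofReal_mul (inv_nonneg.mpr hα.le)
      _ < ⊤ := ENNReal.mul_lt_top ENNReal.ofReal_lt_top hGfin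
  refine ⟨claim1, claim2, ?_⟩
  -- finiteness of J f₀
  have hdiff : ∀ k, ‖f₀ k - b k‖ ≤ ‖b k‖ := by
    intro k
    have e : f₀ k - b k = (Complex.ofReal ((1 + α * nrmSq k ^ (s-r))⁻¹ - 1)) * b k := by
      rw [hf₀ k, Complex.ofReal_sub, Complex.ofReal_inv, Complex.ofReal_one]
      ring
    rw [e, norm_mul, Complex.norm_real, Real.norm_eq_abs]
    have h01 : (1 + α * nrmSq k ^ (s-r))⁻¹ ≤ 1 := by
      apply inv_le_one_of_one_le₀
      have := mul_nonneg hα.le (hrp (s-r) k).le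
      linarith
    have h02 : (0:ℝ) < (1 + α * nrmSq k ^ (s-r))⁻¹ := inv_pos.mpr (hden k)
    have habs : |(1 + α * nrmSq k ^ (s-r))⁻¹ - 1| ≤ 1 :=
      abs_le.mpr ⟨by linarith, by linarith⟩
    calc |(1 + α * nrmSq k ^ (s-r))⁻¹ - 1| * ‖b k‖ ≤ 1 * ‖b k‖ :=
          mul_le_mul_of_nonneg_right habs (norm_nonneg _)
      _ = ‖b k‖ := one_mul _
  have hRfin : R < ⊤ := by
    refine lt_of_le_of_lt (le_trans ?_ le_add_self) hg
    refine ENNReal.tsum_le_tsum fun k => ENNReal.tsum_le_tsum fun v => ?_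
    split_ifs
    · exact zero_le
    · exact le_rfl
  have hT0fin : (∑' k, ENNReal.ofReal
      (nrmSq k ^ r * ‖f₀ k - b k‖ ^ 2 + α * nrmSq k ^ s * ‖f₀ k‖ ^ 2)) < ⊤ := by
    have hpt : ∀ k, nrmSq k ^ r * ‖f₀ k - b k‖ ^ 2 + α * nrmSq k ^ s * ‖f₀ k‖ ^ 2
        ≤ 2 * (nrmSq k ^ r * ‖b k‖ ^ 2) := by
      intro k
      have A : nrmSq k ^ r * ‖f₀ k - b k‖ ^ 2 ≤ nrmSq k ^ r * ‖b k‖ ^ 2 :=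
        mul_le_mul_of_nonneg_left (pow_le_pow_left₀ (norm_nonneg _) (hdiff k) 2)
          (hrp r k).le
      have B : α * nrmSq k ^ s * ‖f₀ k‖ ^ 2 ≤ nrmSq k ^ r * ‖b k‖ ^ 2 := by
        rw [mul_assoc]
        calc α * (nrmSq k ^ s * ‖f₀ k‖ ^ 2)
            ≤ α * (α⁻¹ * (nrmSq k ^ r * ‖b k‖ ^ 2)) :=
              mul_le_mul_of_nonneg_left (hBs k) hα.le
          _ = nrmSq k ^ r * ‖b k‖ ^ 2 := by field_simp
      linarith
    calc (∑' k, ENNReal.ofReal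
          (nrmSq k ^ r * ‖f₀ k - b k‖ ^ 2 + α * nrmSq k ^ s * ‖f₀ k‖ ^ 2))
        ≤ ∑' k, ENNReal.ofReal (2 * (nrmSq k ^ r * ‖b k‖ ^ 2)) :=
          ENNReal.tsum_le_tsum fun k => ENNReal.ofReal_le_ofReal (hpt k)
      _ = ENNReal.ofReal 2 * ∑' k, ENNReal.ofReal (nrmSq k ^ r * ‖b k‖ ^ 2) := by
          rw [← ENNReal.tsum_mul_left]
          exact tsum_congr fun k => ENNReal.ofReal_mul (by norm_num)
      _ < ⊤ := ENNReal.mul_lt_top ENNReal.ofReal_lt_top hGfin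
  have hJ0fin : hsQNormSq r Q vk (fun k v => IaQ Q f₀ k v - g k v)
      + ENNReal.ofReal α * hsNormSq s f₀ < ⊤ := by
    rw [hJ f₀]
    exact ENNReal.add_lt_top.mpr ⟨hRfin, hT0fin⟩
  -- the minimization
  intro f hf
  obtain ⟨k₀, hk₀⟩ := Function.ne_iff.mp hf
  have hTf : ∀ k, ENNReal.ofReal
        (nrmSq k ^ r * ‖f k - b k‖ ^ 2 + α * nrmSq k ^ s * ‖f k‖ ^ 2)
      = ENNReal.ofReal
          (nrmSq k ^ r * ‖f₀ k - b k‖ ^ 2 + α * nrmSq k ^ s * ‖f₀ k‖ ^ 2)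
        + ENNReal.ofReal ((nrmSq k ^ r + α * nrmSq k ^ s) * ‖f k - f₀ k‖ ^ 2) := by
    intro k
    rw [← ENNReal.ofReal_add, ← hT f k]
    · have := (hrp r k).le
      have := mul_nonneg (mul_nonneg hα.le (hrp s k).le) (sq_nonneg ‖f₀ k‖)
      have := mul_nonneg (hrp r k).le (sq_nonneg ‖f₀ k - b k‖)
      linarith
    · exact mul_nonneg (add_pos (hrp r k) (mul_pos hα (hrp s k))).le (sq_nonneg _)
  have hE : (0:ℝ≥0∞) < ENNReal.ofReal ((nrmSq k₀ ^ r + α * nrmSq k₀ ^ s) * ‖f k₀ - f₀ k₀‖ ^ 2) := by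
    apply ENNReal.ofReal_pos.mpr
    exact mul_pos (add_pos (hrp r k₀) (mul_pos hα (hrp s k₀)))
      (pow_pos (norm_sub_pos_iff.mpr hk₀) 2)
  rw [hJ f, hJ f₀]
  rw [tsum_congr hTf, ENNReal.tsum_add]
  have hfin : R + (∑' k, ENNReal.ofReal
      (nrmSq k ^ r * ‖f₀ k - b k‖ ^ 2 + α * nrmSq k ^ s * ‖f₀ k‖ ^ 2)) ≠ ⊤ :=
    (ENNReal.add_lt_top.mpr ⟨hRfin, hT0fin⟩).ne
  calc R + (∑' k, ENNReal.ofReal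
        (nrmSq k ^ r * ‖f₀ k - b k‖ ^ 2 + α * nrmSq k ^ s * ‖f₀ k‖ ^ 2))
      < (R + ∑' k, ENNReal.ofReal
          (nrmSq k ^ r * ‖f₀ k - b k‖ ^ 2 + α * nrmSq k ^ s * ‖f₀ k‖ ^ 2))
        + ENNReal.ofReal ((nrmSq k₀ ^ r + α * nrmSq k₀ ^ s) * ‖f k₀ - f₀ k₀‖ ^ 2) :=
        ENNReal.lt_add_right hfin hE.ne'
    _ ≤ (R + ∑' k, ENNReal.ofReal
          (nrmSq k ^ r * ‖f₀ k - b k‖ ^ 2 + α * nrmSq k ^ s * ‖f₀ k‖ ^ 2))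
        + ∑' k, ENNReal.ofReal ((nrmSq k ^ r + α * nrmSq k ^ s) * ‖f k - f₀ k‖ ^ 2) :=
        add_le_add_right (ENNReal.le_tsum k₀) _
    _ = R + ((∑' k, ENNReal.ofReal
          (nrmSq k ^ r * ‖f₀ k - b k‖ ^ 2 + α * nrmSq k ^ s * ‖f₀ k‖ ^ 2))
        + ∑' k, ENNReal.ofReal ((nrmSq k ^ r + α * nrmSq k ^ s) * ‖f k - f₀ k‖ ^ 2)) := by
        ring
end
end

section
/- Suppose r, t, s, δ ∈ ℝ satisfy 2s + t ≥ r, δ ≥ 0, and s > 0, and let f ∈ H^{r+δ}(𝕋²). Then the regularized reconstruction operator P^s_α I* with parameter choice α(ε) = √ε is a regularization strategy: lim_{ε→0⁺} sup{ ‖P^s_{√ε} I*(I f + g) − f‖_{H^r(𝕋²)} : g ∈ H^t(𝕋²×Q), ‖g‖_{H^t(𝕋²×Q)} ≤ ε } = 0. -/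
noncomputable section
open scoped ENNReal NNReal

-- auxiliary lemmas to insert before the theorem (using statement's defs)
section RegAux

open Filter

lemma one_le_nrmSq (k : Fin 2 → ℤ) : 1 ≤ nrmSq k := by
  have h0 := sq_nonneg ((k 0 : ℝ)); have h1 := sq_nonneg ((k 1 : ℝ))
  unfold nrmSq; linarith

lemma nrmSq_pos (k : Fin 2 → ℤ) : 0 < nrmSq k := lt_of_lt_of_le one_pos (one_le_nrmSq k)

lemma nrmSq_rpow_pos (k : Fin 2 → ℤ) (x : ℝ) : 0 < nrmSq k ^ x :=
  Real.rpow_pos_of_pos (nrmSq_pos k) x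

lemma nrmSq_rpow_mono (k : Fin 2 → ℤ) {a b : ℝ} (h : a ≤ b) :
    nrmSq k ^ a ≤ nrmSq k ^ b :=
  Real.rpow_le_rpow_of_exponent_le (one_le_nrmSq k) h

lemma nrmSq_split (k : Fin 2 → ℤ) (r t s : ℝ) (h : r ≤ t + 2*s) :
    nrmSq k ^ r ≤ nrmSq k ^ t * (nrmSq k ^ s)^2 := by
  calc nrmSq k ^ r ≤ nrmSq k ^ (t + 2*s) := nrmSq_rpow_mono k h
    _ = nrmSq k ^ t * (nrmSq k ^ s)^2 := by
        rw [sq, ← Real.rpow_add (nrmSq_pos k), ← Real.rpow_add (nrmSq_pos k)]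
        congr 1; ring

lemma dotZ_zero_left (v : Fin 2 → ℤ) : dotZ 0 v = 0 := by simp [dotZ]

lemma istar_eq (Q : Set (Fin 2 → ℤ)) (vk : (Fin 2 → ℤ) → Q)
    (hvk : ∀ k : Fin 2 → ℤ, k ≠ 0 →
      dotZ k (vk k).1 = 0 ∧ ∀ v : Q, dotZ k v.1 = 0 → v = vk k)
    (f : (Fin 2 → ℤ) → ℂ) (g : (Fin 2 → ℤ) → Q → ℂ) (k : Fin 2 → ℤ) :
    Istar Q vk (fun k' v => IaQ Q f k' v + g k' v) k = f k + g k (vk k) := by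
  unfold Istar IaQ
  simp only
  rw [if_pos]
  by_cases hk : k = 0
  · subst hk; exact dotZ_zero_left _
  · exact (hvk k hk).1

lemma err_eq (s α : ℝ) (f : (Fin 2 → ℤ) → ℂ) (h : (Fin 2 → ℤ) → ℂ)
    (k : Fin 2 → ℤ) :
    Pmul s α (fun k' => f k' + h k') k - f k =
      Complex.ofReal ((1 + α * nrmSq k ^ s)⁻¹) * h k
        + Complex.ofReal ((1 + α * nrmSq k ^ s)⁻¹ - 1) * f k := by
  unfold Pmul
  rw [← Complex.ofReal_inv]
  push_cast
  ring

lemma term1_bound (k : Fin 2 → ℤ) (r t s α : ℝ) (hα : 0 < α) (hrts : r ≤ t + 2*s)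
    (c : ℝ) (hc : 0 ≤ c) :
    nrmSq k ^ r * (((1 + α * nrmSq k ^ s)⁻¹)^2 * c) ≤ α⁻¹^2 * (nrmSq k ^ t * c) := by
  have hNs := nrmSq_rpow_pos k s
  have hNt := nrmSq_rpow_pos k t
  have hd : (0:ℝ) < 1 + α * nrmSq k ^ s := by positivity
  have key : nrmSq k ^ r * ((1 + α * nrmSq k ^ s)⁻¹)^2 ≤ α⁻¹^2 * nrmSq k ^ t := by
    have h1 : nrmSq k ^ s * (1 + α * nrmSq k ^ s)⁻¹ ≤ α⁻¹ := by
      rw [← div_eq_mul_inv, div_le_iff₀ hd]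
      have he : α⁻¹ * (1 + α * nrmSq k ^ s) = α⁻¹ + nrmSq k ^ s := by
        field_simp
      rw [he]
      have := inv_pos.2 hα
      linarith
    have h2 : (nrmSq k ^ s * (1 + α * nrmSq k ^ s)⁻¹)^2 ≤ α⁻¹^2 :=
      pow_le_pow_left₀ (by positivity) h1 2
    calc nrmSq k ^ r * ((1 + α * nrmSq k ^ s)⁻¹)^2
        ≤ (nrmSq k ^ t * (nrmSq k ^ s)^2) * ((1 + α * nrmSq k ^ s)⁻¹)^2 := by
          apply mul_le_mul_of_nonneg_right (nrmSq_split k r t s hrts) (by positivity)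
      _ = nrmSq k ^ t * (nrmSq k ^ s * (1 + α * nrmSq k ^ s)⁻¹)^2 := by ring
      _ ≤ nrmSq k ^ t * α⁻¹^2 := mul_le_mul_of_nonneg_left h2 (le_of_lt hNt)
      _ = α⁻¹^2 * nrmSq k ^ t := by ring
  calc nrmSq k ^ r * (((1 + α * nrmSq k ^ s)⁻¹)^2 * c)
      = (nrmSq k ^ r * ((1 + α * nrmSq k ^ s)⁻¹)^2) * c := by ring
    _ ≤ (α⁻¹^2 * nrmSq k ^ t) * c := mul_le_mul_of_nonneg_right key hc
    _ = α⁻¹^2 * (nrmSq k ^ t * c) := by ring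

lemma coef2_le_one (x : ℝ) (hx : 0 ≤ x) : ((1 + x)⁻¹ - 1)^2 ≤ 1 := by
  have h1 : (0:ℝ) < 1 + x := by linarith
  have h2 : (1 + x)⁻¹ ≤ 1 := by
    rw [inv_le_one_iff₀]; right; linarith
  have h3 : 0 < (1 + x)⁻¹ := by positivity
  nlinarith

lemma hsum_h_le (t : ℝ) (Q : Set (Fin 2 → ℤ)) (vk : (Fin 2 → ℤ) → Q)
    (g : (Fin 2 → ℤ) → Q → ℂ) :
    ∑' k : Fin 2 → ℤ, ENNReal.ofReal (nrmSq k ^ t * ‖g k (vk k)‖ ^ 2)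
      ≤ hsQNormSq t Q vk g := by
  classical
  set F : (Fin 2 → ℤ) → ℝ≥0∞ := fun k => ENNReal.ofReal (nrmSq k ^ t * ‖g k (vk k)‖ ^ 2)
  have h0 : F 0 = ENNReal.ofReal (‖g 0 (vk 0)‖ ^ 2) := by
    have : nrmSq 0 = 1 := by simp [nrmSq]
    simp [F, this]
  have hsplit : ∑' k, F k = F 0 + ∑' k, if k = 0 then 0 else F k := by
    rw [ENNReal.tsum_eq_add_tsum_ite (0 : Fin 2 → ℤ)]
    congr 1
    exact tsum_congr fun k => by split_ifs <;> rfl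
  have hsub : ∑' k, (if k = 0 then 0 else F k)
      = ∑' (k : {k : Fin 2 → ℤ // k ≠ 0}), F k.1 := by
    have hinj : Function.Injective (Subtype.val : {k : Fin 2 → ℤ // k ≠ 0} → (Fin 2 → ℤ)) :=
      Subtype.val_injective
    have hsupp : Function.support (fun k => if k = 0 then 0 else F k)
        ⊆ Set.range (Subtype.val : {k : Fin 2 → ℤ // k ≠ 0} → (Fin 2 → ℤ)) := by
      intro k hk
      by_cases h : k = 0
      · simp [h] at hk
      · exact ⟨⟨k, h⟩, rfl⟩
    calc ∑' k, (if k = 0 then 0 else F k)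
        = ∑' (j : {k : Fin 2 → ℤ // k ≠ 0}), (if j.1 = 0 then 0 else F j.1) :=
          (hinj.tsum_eq hsupp).symm
      _ = _ := tsum_congr fun j => if_neg j.2
  rw [hsplit, hsub, h0]
  unfold hsQNormSq
  gcongr with k
  exact ENNReal.le_tsum (vk k.1)

lemma approx_tendsto (r δ s : ℝ) (hδ : 0 ≤ δ) (f : (Fin 2 → ℤ) → ℂ)
    (hf : hsNormSq (r + δ) f < ⊤) :
    Tendsto (fun ε : ℝ => ∑' k : Fin 2 → ℤ,
        ENNReal.ofReal (nrmSq k ^ r *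
          (((1 + Real.sqrt ε * nrmSq k ^ s)⁻¹ - 1)^2 * ‖f k‖^2)))
      (nhdsWithin 0 (Set.Ioi 0)) (nhds 0) := by
  set bound : (Fin 2 → ℤ) → ℝ := fun k => nrmSq k ^ r * ‖f k‖^2 with hbound
  set u : ℝ → (Fin 2 → ℤ) → ℝ := fun ε k =>
    nrmSq k ^ r * (((1 + Real.sqrt ε * nrmSq k ^ s)⁻¹ - 1)^2 * ‖f k‖^2) with hu
  have hbound_nonneg : ∀ k, 0 ≤ bound k := fun k => by
    have := (nrmSq_rpow_pos k r).le; positivity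
  have hu_nonneg : ∀ ε k, 0 ≤ u ε k := fun ε k => by
    have := (nrmSq_rpow_pos k r).le; positivity
  have hfin : ∑' k : Fin 2 → ℤ, ENNReal.ofReal (bound k) ≠ ⊤ := by
    refine ne_top_of_le_ne_top hf.ne ?_
    refine ENNReal.tsum_le_tsum fun k => ENNReal.ofReal_le_ofReal ?_
    exact mul_le_mul_of_nonneg_right (nrmSq_rpow_mono k (by linarith)) (by positivity)
  have hsummable : Summable bound := by
    have := ENNReal.summable_toReal hfin
    exact this.congr fun k => ENNReal.toReal_ofReal (hbound_nonneg k)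
  have h_le : ∀ ε k, u ε k ≤ bound k := by
    intro ε k
    have hx : 0 ≤ Real.sqrt ε * nrmSq k ^ s :=
      mul_nonneg (Real.sqrt_nonneg ε) (nrmSq_rpow_pos k s).le
    have hc := coef2_le_one _ hx
    calc u ε k ≤ nrmSq k ^ r * (1 * ‖f k‖^2) := by
          apply mul_le_mul_of_nonneg_left _ (nrmSq_rpow_pos k r).le
          exact mul_le_mul_of_nonneg_right hc (by positivity)
      _ = bound k := by rw [one_mul]
  have hab : ∀ k, Tendsto (fun ε => u ε k) (nhdsWithin 0 (Set.Ioi 0)) (nhds 0) := by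
    intro k
    have h1 : ContinuousAt (fun ε : ℝ => 1 + Real.sqrt ε * nrmSq k ^ s) 0 :=
      continuousAt_const.add (Real.continuous_sqrt.continuousAt.mul continuousAt_const)
    have h2 : ContinuousAt (fun ε : ℝ => (1 + Real.sqrt ε * nrmSq k ^ s)⁻¹) 0 := by
      apply h1.inv₀; simp
    have hc : ContinuousAt (fun ε => u ε k) 0 :=
      continuousAt_const.mul (((h2.sub continuousAt_const).pow 2).mul continuousAt_const)
    have h3 : Tendsto (fun ε => u ε k) (nhdsWithin 0 (Set.Ioi 0)) (nhds (u 0 k)) :=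
      (hc.tendsto).mono_left nhdsWithin_le_nhds
    have h4 : u 0 k = 0 := by simp [u]
    rwa [h4] at h3
  have hreal : Tendsto (fun ε => ∑' k, u ε k) (nhdsWithin 0 (Set.Ioi 0)) (nhds 0) := by
    have := tendsto_tsum_of_dominated_convergence hsummable hab
      (Eventually.of_forall fun ε k => by
        rw [Real.norm_eq_abs, abs_of_nonneg (hu_nonneg ε k)]; exact h_le ε k)
    simpa using this
  have heq : ∀ ε, ∑' k, ENNReal.ofReal (u ε k) = ENNReal.ofReal (∑' k, u ε k) := by
    intro ε
    exact (ENNReal.ofReal_tsum_of_nonneg (hu_nonneg ε)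
      (hsummable.of_nonneg_of_le (hu_nonneg ε) (h_le ε))).symm
  have := ENNReal.tendsto_ofReal hreal
  rw [ENNReal.ofReal_zero] at this
  exact this.congr fun ε => (heq ε).symm

end RegAux

section RegMain
open Filter

lemma main_bound (r t s ε : ℝ) (hrts : r ≤ 2*s + t) (hε : 0 < ε)
    (Q : Set (Fin 2 → ℤ)) (vk : (Fin 2 → ℤ) → Q)
    (hvk : ∀ k : Fin 2 → ℤ, k ≠ 0 →
      dotZ k (vk k).1 = 0 ∧ ∀ v : Q, dotZ k v.1 = 0 → v = vk k)
    (f : (Fin 2 → ℤ) → ℂ) (g : (Fin 2 → ℤ) → Q → ℂ)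
    (hgt : hsQNormSq t Q vk g ≤ ENNReal.ofReal (ε ^ 2)) :
    hsNormSq r (fun k =>
        Pmul s (Real.sqrt ε) (Istar Q vk (fun k' v => IaQ Q f k' v + g k' v)) k - f k)
      ≤ 2 * ENNReal.ofReal ε +
        2 * ∑' k : Fin 2 → ℤ, ENNReal.ofReal (nrmSq k ^ r *
          (((1 + Real.sqrt ε * nrmSq k ^ s)⁻¹ - 1)^2 * ‖f k‖^2)) := by
  set α := Real.sqrt ε with hαdef
  have hα : 0 < α := Real.sqrt_pos.2 hε
  set h : (Fin 2 → ℤ) → ℂ := fun k => g k (vk k) with hh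
  have hIstar : Istar Q vk (fun k' v => IaQ Q f k' v + g k' v) = fun k => f k + h k :=
    funext fun k => istar_eq Q vk hvk f g k
  have hpt : ∀ k : Fin 2 → ℤ,
      ENNReal.ofReal (nrmSq k ^ r *
        ‖Pmul s α (Istar Q vk (fun k' v => IaQ Q f k' v + g k' v)) k - f k‖ ^ 2)
      ≤ 2 * ENNReal.ofReal (nrmSq k ^ r * (((1 + α * nrmSq k ^ s)⁻¹)^2 * ‖h k‖^2))
        + 2 * ENNReal.ofReal (nrmSq k ^ r *
            (((1 + α * nrmSq k ^ s)⁻¹ - 1)^2 * ‖f k‖^2)) := by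
    intro k
    set a := (1 + α * nrmSq k ^ s)⁻¹ with ha
    set b := (1 + α * nrmSq k ^ s)⁻¹ - 1 with hb
    have herr : Pmul s α (Istar Q vk (fun k' v => IaQ Q f k' v + g k' v)) k - f k
        = Complex.ofReal a * h k + Complex.ofReal b * f k := by
      rw [hIstar]; exact err_eq s α f h k
    have hnormsq : ‖Pmul s α (Istar Q vk (fun k' v => IaQ Q f k' v + g k' v)) k - f k‖^2
        ≤ 2 * (a^2 * ‖h k‖^2) + 2 * (b^2 * ‖f k‖^2) := by
      rw [herr]
      have htri := norm_add_le (Complex.ofReal a * h k) (Complex.ofReal b * f k)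
      have h1 : ‖Complex.ofReal a * h k‖ = |a| * ‖h k‖ := by
        rw [norm_mul, Complex.norm_real, Real.norm_eq_abs]
      have h2 : ‖Complex.ofReal b * f k‖ = |b| * ‖f k‖ := by
        rw [norm_mul, Complex.norm_real, Real.norm_eq_abs]
      have hsq1 : (|a| * ‖h k‖)^2 = a^2 * ‖h k‖^2 := by rw [mul_pow, sq_abs]
      have hsq2 : (|b| * ‖f k‖)^2 = b^2 * ‖f k‖^2 := by rw [mul_pow, sq_abs]
      nlinarith [norm_nonneg (Complex.ofReal a * h k + Complex.ofReal b * f k),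
        norm_nonneg (Complex.ofReal a * h k), norm_nonneg (Complex.ofReal b * f k),
        sq_nonneg (‖Complex.ofReal a * h k‖ - ‖Complex.ofReal b * f k‖)]
    have hNr := (nrmSq_rpow_pos k r).le
    calc ENNReal.ofReal (nrmSq k ^ r *
            ‖Pmul s α (Istar Q vk (fun k' v => IaQ Q f k' v + g k' v)) k - f k‖ ^ 2)
        ≤ ENNReal.ofReal (2 * (nrmSq k ^ r * (a^2 * ‖h k‖^2))
            + 2 * (nrmSq k ^ r * (b^2 * ‖f k‖^2))) := by
          apply ENNReal.ofReal_le_ofReal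
          nlinarith [sq_nonneg a, sq_nonneg b, sq_nonneg ‖h k‖, sq_nonneg ‖f k‖]
      _ = 2 * ENNReal.ofReal (nrmSq k ^ r * (a^2 * ‖h k‖^2))
            + 2 * ENNReal.ofReal (nrmSq k ^ r * (b^2 * ‖f k‖^2)) := by
          rw [ENNReal.ofReal_add (by positivity) (by positivity),
            ENNReal.ofReal_mul (by norm_num : (0:ℝ) ≤ 2),
            ENNReal.ofReal_mul (by norm_num : (0:ℝ) ≤ 2)]
          norm_num
  have hterm1 : ∑' k : Fin 2 → ℤ,
      ENNReal.ofReal (nrmSq k ^ r * (((1 + α * nrmSq k ^ s)⁻¹)^2 * ‖h k‖^2))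
      ≤ ENNReal.ofReal ε := by
    have hstep : ∀ k : Fin 2 → ℤ,
        ENNReal.ofReal (nrmSq k ^ r * (((1 + α * nrmSq k ^ s)⁻¹)^2 * ‖h k‖^2))
        ≤ ENNReal.ofReal (α⁻¹^2) * ENNReal.ofReal (nrmSq k ^ t * ‖h k‖^2) := by
      intro k
      rw [← ENNReal.ofReal_mul (by positivity)]
      exact ENNReal.ofReal_le_ofReal
        (term1_bound k r t s α hα (by linarith) (‖h k‖^2) (by positivity))
    calc ∑' k : Fin 2 → ℤ,
          ENNReal.ofReal (nrmSq k ^ r * (((1 + α * nrmSq k ^ s)⁻¹)^2 * ‖h k‖^2))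
        ≤ ∑' k : Fin 2 → ℤ,
            ENNReal.ofReal (α⁻¹^2) * ENNReal.ofReal (nrmSq k ^ t * ‖h k‖^2) :=
          ENNReal.tsum_le_tsum hstep
      _ = ENNReal.ofReal (α⁻¹^2) *
            ∑' k : Fin 2 → ℤ, ENNReal.ofReal (nrmSq k ^ t * ‖h k‖^2) :=
          ENNReal.tsum_mul_left
      _ ≤ ENNReal.ofReal (α⁻¹^2) * ENNReal.ofReal (ε^2) := by
          gcongr
          exact le_trans (hsum_h_le t Q vk g) hgt
      _ = ENNReal.ofReal (α⁻¹^2 * ε^2) := (ENNReal.ofReal_mul (by positivity)).symm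
      _ = ENNReal.ofReal ε := by
          congr 1
          have hsq : α^2 = ε := Real.sq_sqrt hε.le
          rw [inv_pow, hsq]
          field_simp
  calc hsNormSq r (fun k =>
          Pmul s α (Istar Q vk (fun k' v => IaQ Q f k' v + g k' v)) k - f k)
      ≤ ∑' k : Fin 2 → ℤ,
          (2 * ENNReal.ofReal (nrmSq k ^ r * (((1 + α * nrmSq k ^ s)⁻¹)^2 * ‖h k‖^2))
           + 2 * ENNReal.ofReal (nrmSq k ^ r *
               (((1 + α * nrmSq k ^ s)⁻¹ - 1)^2 * ‖f k‖^2))) :=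
        ENNReal.tsum_le_tsum hpt
    _ = 2 * ∑' k : Fin 2 → ℤ,
            ENNReal.ofReal (nrmSq k ^ r * (((1 + α * nrmSq k ^ s)⁻¹)^2 * ‖h k‖^2))
        + 2 * ∑' k : Fin 2 → ℤ, ENNReal.ofReal (nrmSq k ^ r *
            (((1 + α * nrmSq k ^ s)⁻¹ - 1)^2 * ‖f k‖^2)) := by
        rw [ENNReal.tsum_add, ENNReal.tsum_mul_left, ENNReal.tsum_mul_left]
    _ ≤ 2 * ENNReal.ofReal ε + 2 * ∑' k : Fin 2 → ℤ,
          ENNReal.ofReal (nrmSq k ^ r *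
            (((1 + α * nrmSq k ^ s)⁻¹ - 1)^2 * ‖f k‖^2)) := by
        gcongr


end RegMain

theorem regularization_strategy
    (r t s δ : ℝ) (hrts : r ≤ 2*s + t) (hδ : 0 ≤ δ) (hs : 0 < s)
    (Q : Set (Fin 2 → ℤ))
    (hQ0 : ∀ v ∈ Q, v ≠ 0)
    (hQ : ∀ v : Fin 2 → ℤ, v ≠ 0 → ∃! q, q ∈ Q ∧ ∃ m : ℤ, v = m • q)
    (vk : (Fin 2 → ℤ) → Q)
    (hvk : ∀ k : Fin 2 → ℤ, k ≠ 0 →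
      dotZ k (vk k).1 = 0 ∧ ∀ v : Q, dotZ k v.1 = 0 → v = vk k)
    (f : (Fin 2 → ℤ) → ℂ) (hf : hsNormSq (r + δ) f < ⊤) :
    Filter.Tendsto
      (fun ε : ℝ =>
        ⨆ (g : (Fin 2 → ℤ) → Q → ℂ) (_ : ∀ v w : Q, g 0 v = g 0 w)
          (_ : hsQNormSq t Q vk g ≤ ENNReal.ofReal (ε ^ 2)),
          (hsNormSq r (fun k =>
            Pmul s (Real.sqrt ε) (Istar Q vk (fun k' v => IaQ Q f k' v + g k' v)) k - f k))
            ^ (1/2 : ℝ))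
      (nhdsWithin 0 (Set.Ioi 0)) (nhds 0) := by
  classical
  set B : ℝ → ℝ≥0∞ := fun ε => ∑' k : Fin 2 → ℤ,
    ENNReal.ofReal (nrmSq k ^ r *
      (((1 + Real.sqrt ε * nrmSq k ^ s)⁻¹ - 1)^2 * ‖f k‖^2)) with hBdef
  set C : ℝ → ℝ≥0∞ := fun ε => (2 * ENNReal.ofReal ε + 2 * B ε) ^ (1/2 : ℝ) with hCdef
  have hCt : Filter.Tendsto C (nhdsWithin 0 (Set.Ioi 0)) (nhds 0) := by
    have h1 : Filter.Tendsto (fun ε : ℝ => ENNReal.ofReal ε)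
        (nhdsWithin 0 (Set.Ioi 0)) (nhds 0) := by
      have : Filter.Tendsto (fun ε : ℝ => ε) (nhdsWithin 0 (Set.Ioi 0)) (nhds 0) :=
        Filter.tendsto_id.mono_left nhdsWithin_le_nhds
      simpa using ENNReal.tendsto_ofReal this
    have h2 : Filter.Tendsto B (nhdsWithin 0 (Set.Ioi 0)) (nhds 0) :=
      approx_tendsto r δ s hδ f hf
    have h3a : Filter.Tendsto (fun ε : ℝ => 2 * ENNReal.ofReal ε)
        (nhdsWithin 0 (Set.Ioi 0)) (nhds (2 * 0)) :=
      ENNReal.Tendsto.const_mul h1 (Or.inr (by simp))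
    have h3b : Filter.Tendsto (fun ε : ℝ => 2 * B ε)
        (nhdsWithin 0 (Set.Ioi 0)) (nhds (2 * 0)) :=
      ENNReal.Tendsto.const_mul h2 (Or.inr (by simp))
    have h3 : Filter.Tendsto (fun ε : ℝ => 2 * ENNReal.ofReal ε + 2 * B ε)
        (nhdsWithin 0 (Set.Ioi 0)) (nhds 0) := by
      have := h3a.add h3b
      simpa using this
    have h4 : Filter.Tendsto (fun x : ℝ≥0∞ => x ^ (1/2 : ℝ)) (nhds 0) (nhds 0) := by
      have := (ENNReal.continuous_rpow_const (y := 1/2)).tendsto (0 : ℝ≥0∞)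
      rwa [ENNReal.zero_rpow_of_pos (by norm_num)] at this
    exact h4.comp h3
  refine tendsto_of_tendsto_of_tendsto_of_le_of_le' tendsto_const_nhds hCt
    (Filter.Eventually.of_forall fun ε => zero_le) ?_
  filter_upwards [self_mem_nhdsWithin] with ε hε
  refine iSup_le fun g => iSup_le fun _ => iSup_le fun hgt => ?_
  refine ENNReal.rpow_le_rpow ?_ (by norm_num)
  exact main_bound r t s ε hrts hε Q vk hvk f g hgt
end
end

section
/- Suppose r, t, s, δ ∈ ℝ satisfy 2s + t ≥ r, s > 0, and 0 < δ < 2s, let ε > 0, 0 < α ≤ 2s/δ − 1, f ∈ H^{r+δ}(𝕋²), and g ∈ H^t(𝕋²×Q) with ‖g‖_{H^t(𝕋²×Q)} ≤ ε. Then ‖P^s_α I*(I f + g) − f‖_{H^r(𝕋²)} ≤ α^{δ/2s} C(δ/2s) ‖f‖_{H^{r+δ}(𝕋²)} + ε/α, where C(x) = x (x^{−1} − 1)^{1−x}. -/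
noncomputable section
open scoped ENNReal NNReal

open MeasureTheory in
private lemma my_amgm (θ α y : ℝ) (hθ : 0 < θ) (hθ1 : θ < 1) (hα : 0 < α) (hy : 0 < y) :
    α * y ^ (1-θ) ≤ α ^ θ * (θ * (θ⁻¹ - 1) ^ (1-θ)) * (1 + α * y) := by
  have h1θ : 0 < 1 - θ := by linarith
  have key := Real.geom_mean_le_arith_mean2_weighted (le_of_lt hθ) (le_of_lt h1θ)
    (le_of_lt (inv_pos.mpr hθ)) (le_of_lt (div_pos (mul_pos hα hy) h1θ)) (by ring)
  have hrhs : θ * θ⁻¹ + (1-θ) * (α*y/(1-θ)) = 1 + α * y := by field_simp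
  rw [hrhs] at key
  have hB : θ * (θ⁻¹ - 1) ^ (1-θ) = θ ^ θ * (1-θ) ^ (1-θ) := by
    have h1 : θ⁻¹ - 1 = (1-θ)/θ := by field_simp
    rw [h1, Real.div_rpow (le_of_lt h1θ) (le_of_lt hθ)]
    have h2 : θ / θ ^ (1-θ) = θ ^ θ := by
      rw [div_eq_iff (ne_of_gt (Real.rpow_pos_of_pos hθ _)), ← Real.rpow_add hθ]
      norm_num
    rw [← h2]; ring
  rw [hB]
  have hpos : (0:ℝ) < α ^ θ * (θ ^ θ * (1-θ) ^ (1-θ)) := by positivity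
  have key2 := mul_le_mul_of_nonneg_left key (le_of_lt hpos)
  refine le_trans (le_of_eq ?_) key2
  rw [Real.div_rpow (le_of_lt (mul_pos hα hy)) (le_of_lt h1θ),
    Real.mul_rpow (le_of_lt hα) (le_of_lt hy), Real.inv_rpow (le_of_lt hθ)]
  have hαθ : α ^ θ * α ^ (1-θ) = α := by
    rw [← Real.rpow_add hα]; norm_num
  field_simp
  linear_combination (-1 : ℝ) * hαθ

private lemma my_mult_bound (s δ α X : ℝ) (hs : 0 < s) (hδ1 : 0 < δ) (hδ2 : δ < 2*s)
    (hα : 0 < α) (hX : 0 < X) :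
    α * X ^ s / (1 + α * X ^ s) ≤
      (α ^ (δ/(2*s)) * ((δ/(2*s)) * ((δ/(2*s))⁻¹ - 1) ^ (1 - δ/(2*s)))) * X ^ (δ/2) := by
  set θ := δ/(2*s) with hθdef
  have h2s : 0 < 2*s := by linarith
  have hθ : 0 < θ := div_pos hδ1 h2s
  have hθ1 : θ < 1 := (div_lt_one h2s).mpr hδ2
  set y := X ^ s with hydef
  have hy : 0 < y := Real.rpow_pos_of_pos hX s
  have hXδ : X ^ (δ/2) = y ^ θ := by
    rw [hydef, ← Real.rpow_mul hX.le, hθdef]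
    congr 1
    field_simp
  rw [hXδ]
  have hden : 0 < 1 + α * y := by positivity
  rw [div_le_iff₀ hden]
  have amgm := my_amgm θ α y hθ hθ1 hα hy
  have h1 : α * y = α * y ^ (1-θ) * y ^ θ := by
    rw [mul_assoc, ← Real.rpow_add hy]
    norm_num
  calc α * y = α * y ^ (1-θ) * y ^ θ := h1
    _ ≤ α ^ θ * (θ * (θ⁻¹ - 1) ^ (1-θ)) * (1 + α * y) * y ^ θ :=
        mul_le_mul_of_nonneg_right amgm (Real.rpow_pos_of_pos hy θ).le
    _ = α ^ θ * (θ * (θ⁻¹ - 1) ^ (1-θ)) * y ^ θ * (1 + α * y) := by ring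

theorem regularization_estimate
    (r t s δ : ℝ) (hrts : r ≤ 2*s + t) (hs : 0 < s) (hδ1 : 0 < δ) (hδ2 : δ < 2*s)
    (ε α : ℝ) (hε : 0 < ε) (hα1 : 0 < α) (hα2 : α ≤ 2*s/δ - 1)
    (Q : Set (Fin 2 → ℤ))
    (hQ0 : ∀ v ∈ Q, v ≠ 0)
    (hQ : ∀ v : Fin 2 → ℤ, v ≠ 0 → ∃! q, q ∈ Q ∧ ∃ m : ℤ, v = m • q)
    (vk : (Fin 2 → ℤ) → Q)
    (hvk : ∀ k : Fin 2 → ℤ, k ≠ 0 →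
      dotZ k (vk k).1 = 0 ∧ ∀ v : Q, dotZ k v.1 = 0 → v = vk k)
    (f : (Fin 2 → ℤ) → ℂ) (hf : hsNormSq (r + δ) f < ⊤)
    (g : (Fin 2 → ℤ) → Q → ℂ)
    (hg0 : ∀ v w : Q, g 0 v = g 0 w)
    (hg : hsQNormSq t Q vk g ≤ ENNReal.ofReal (ε ^ 2)) :
    (hsNormSq r (fun k =>
        Pmul s α (Istar Q vk (fun k' v => IaQ Q f k' v + g k' v)) k - f k)) ^ (1/2 : ℝ)
      ≤ ENNReal.ofReal
          (α ^ (δ/(2*s)) * ((δ/(2*s)) * ((δ/(2*s))⁻¹ - 1) ^ (1 - δ/(2*s))) *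
              ((hsNormSq (r + δ) f) ^ (1/2 : ℝ)).toReal
            + ε / α) := by
  classical
  set θ := δ/(2*s) with hθdef
  have h2s : 0 < 2*s := by linarith
  have hθ : 0 < θ := div_pos hδ1 h2s
  have hθ1 : θ < 1 := (div_lt_one h2s).mpr hδ2
  set A := α ^ θ * (θ * (θ⁻¹ - 1) ^ (1 - θ)) with hAdef
  have hinv : 0 < θ⁻¹ - 1 := by
    have := one_lt_inv₀ hθ |>.mpr hθ1
    linarith
  have hA : 0 < A := by
    have h1 := Real.rpow_pos_of_pos hinv (1-θ)
    have h2 := Real.rpow_pos_of_pos hα1 θ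
    rw [hAdef]
    positivity
  have hX1 : ∀ k : Fin 2 → ℤ, 1 ≤ nrmSq k := by
    intro k
    unfold nrmSq
    nlinarith [sq_nonneg ((k 0 : ℝ)), sq_nonneg ((k 1 : ℝ))]
  have hXpos : ∀ k : Fin 2 → ℤ, 0 < nrmSq k := fun k => lt_of_lt_of_le one_pos (hX1 k)
  set c : (Fin 2 → ℤ) → ℝ := fun k => α * nrmSq k ^ s / (1 + α * nrmSq k ^ s) with hc
  set d : (Fin 2 → ℤ) → ℝ := fun k => (1 + α * nrmSq k ^ s)⁻¹ with hd
  have hden : ∀ k, 0 < 1 + α * nrmSq k ^ s := by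
    intro k
    have := Real.rpow_pos_of_pos (hXpos k) s
    positivity
  have hd0 : ∀ k, 0 < d k := fun k => inv_pos.mpr (hden k)
  have hc0 : ∀ k, 0 ≤ c k := by
    intro k
    have h1 := Real.rpow_pos_of_pos (hXpos k) s
    have h2 := hden k
    positivity
  set b : (Fin 2 → ℤ) → ℂ := fun k =>
    Pmul s α (Istar Q vk (fun k' v => IaQ Q f k' v + g k' v)) k - f k with hbdef
  have hb : ∀ k, b k = Complex.ofReal (d k) * g k (vk k) - Complex.ofReal (c k) * f k := by
    intro k
    have hdot : dotZ k (vk k).1 = 0 := by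
      by_cases hk : k = 0
      · subst hk; simp [dotZ]
      · exact (hvk k hk).1
    have hne : (1 + α * nrmSq k ^ s) ≠ 0 := (hden k).ne'
    rw [hbdef]
    simp only [Pmul, Istar, IaQ, hdot, if_pos]
    have hdk : d k = (1 + α * nrmSq k ^ s)⁻¹ := rfl
    have hck : c k = α * nrmSq k ^ s / (1 + α * nrmSq k ^ s) := rfl
    have hcne' : ((1:ℂ) + (α:ℂ) * ((nrmSq k ^ s : ℝ) : ℂ)) ≠ 0 := by
      rw [show ((1:ℂ) + (α:ℂ) * ((nrmSq k ^ s : ℝ):ℂ)) = ((1 + α * nrmSq k ^ s : ℝ) : ℂ) by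
        push_cast; ring]
      exact Complex.ofReal_ne_zero.mpr hne
    rw [hdk, hck]
    push_cast
    field_simp [hcne']
    ring
  have hnorm : ∀ k, ‖b k‖ ≤ c k * ‖f k‖ + d k * ‖g k (vk k)‖ := by
    intro k
    rw [hb k]
    refine le_trans (norm_sub_le _ _) ?_
    rw [norm_mul, norm_mul, Complex.norm_real, Complex.norm_real,
      Real.norm_of_nonneg (hd0 k).le, Real.norm_of_nonneg (hc0 k)]
    linarith
  set F : (Fin 2 → ℤ) → ℝ≥0∞ := fun k =>
    ENNReal.ofReal (nrmSq k ^ (r/2) * (c k * ‖f k‖)) with hF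
  set G : (Fin 2 → ℤ) → ℝ≥0∞ := fun k =>
    ENNReal.ofReal (nrmSq k ^ (r/2) * (d k * ‖g k (vk k)‖)) with hG
  have pow2 : ∀ x : ℝ≥0∞, x ^ (2:ℝ) = x ^ (2:ℕ) := fun x => by
    rw [← ENNReal.rpow_natCast x 2]
    norm_num
  have hXr2 : ∀ k : Fin 2 → ℤ, ∀ u : ℝ, nrmSq k ^ (u/2) * nrmSq k ^ (u/2) = nrmSq k ^ u := by
    intro k u
    rw [← Real.rpow_add (hXpos k)]
    congr 1
    ring
  have step1 : hsNormSq r b ≤ ∑' k : Fin 2 → ℤ, (F k + G k) ^ (2:ℝ) := by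
    unfold hsNormSq
    refine ENNReal.tsum_le_tsum fun k => ?_
    have hub : nrmSq k ^ r * ‖b k‖^2 ≤
        (nrmSq k ^ (r/2) * (c k * ‖f k‖) + nrmSq k ^ (r/2) * (d k * ‖g k (vk k)‖))^2 := by
      have h2 : ‖b k‖^2 ≤ (c k * ‖f k‖ + d k * ‖g k (vk k)‖)^2 := by
        have h3 := norm_nonneg (b k)
        nlinarith [hnorm k]
      calc nrmSq k ^ r * ‖b k‖^2
          ≤ nrmSq k ^ r * (c k * ‖f k‖ + d k * ‖g k (vk k)‖)^2 :=
            mul_le_mul_of_nonneg_left h2 (Real.rpow_nonneg (hXpos k).le r)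
        _ = (nrmSq k ^ (r/2) * (c k * ‖f k‖) + nrmSq k ^ (r/2) * (d k * ‖g k (vk k)‖))^2 := by
            rw [← hXr2 k r]; ring
    refine le_trans (ENNReal.ofReal_le_ofReal hub) (le_of_eq ?_)
    have hu : 0 ≤ nrmSq k ^ (r/2) * (c k * ‖f k‖) := by
      have := hc0 k
      have := norm_nonneg (f k)
      have := Real.rpow_nonneg (hXpos k).le (r/2)
      positivity
    have hv : 0 ≤ nrmSq k ^ (r/2) * (d k * ‖g k (vk k)‖) := by
      have := (hd0 k).le
      have := norm_nonneg (g k (vk k))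
      have := Real.rpow_nonneg (hXpos k).le (r/2)
      positivity
    rw [pow2 (F k + G k), ENNReal.ofReal_pow (add_nonneg hu hv), ENNReal.ofReal_add hu hv]
  have meas : ∀ h : (Fin 2 → ℤ) → ℝ≥0∞, AEMeasurable h (MeasureTheory.Measure.count) := fun h =>
    (measurable_of_countable h).aemeasurable
  have mink : (∑' k : Fin 2 → ℤ, (F k + G k) ^ (2:ℝ)) ^ (1/2:ℝ)
      ≤ (∑' k : Fin 2 → ℤ, F k ^ (2:ℝ)) ^ (1/2:ℝ)
        + (∑' k : Fin 2 → ℤ, G k ^ (2:ℝ)) ^ (1/2:ℝ) := by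
    have h := ENNReal.lintegral_Lp_add_le (μ := MeasureTheory.Measure.count) (meas F) (meas G)
      (by norm_num : (1:ℝ) ≤ 2)
    simpa [MeasureTheory.lintegral_count, Pi.add_apply] using h
  have hFsum : ∑' k : Fin 2 → ℤ, F k ^ (2:ℝ) ≤ ENNReal.ofReal (A^2) * hsNormSq (r+δ) f := by
    unfold hsNormSq
    rw [← ENNReal.tsum_mul_left]
    refine ENNReal.tsum_le_tsum fun k => ?_
    have hu : 0 ≤ nrmSq k ^ (r/2) * (c k * ‖f k‖) :=
      mul_nonneg (Real.rpow_nonneg (hXpos k).le _) (mul_nonneg (hc0 k) (norm_nonneg _))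
    have e1 : F k ^ (2:ℝ) = ENNReal.ofReal ((nrmSq k ^ (r/2) * (c k * ‖f k‖))^2) := by
      rw [pow2 (F k), ENNReal.ofReal_pow hu]
    rw [e1, ← ENNReal.ofReal_mul (by positivity)]
    refine ENNReal.ofReal_le_ofReal ?_
    have hcb : c k ≤ A * nrmSq k ^ (δ/2) := by
      rw [hc, hAdef, hθdef]
      exact my_mult_bound s δ α (nrmSq k) hs hδ1 hδ2 hα1 (hXpos k)
    have hXrδ : nrmSq k ^ r * nrmSq k ^ δ = nrmSq k ^ (r+δ) := by
      rw [← Real.rpow_add (hXpos k)]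
    calc (nrmSq k ^ (r/2) * (c k * ‖f k‖))^2
        = (nrmSq k ^ (r/2) * nrmSq k ^ (r/2) * ‖f k‖^2) * (c k)^2 := by ring
      _ ≤ (nrmSq k ^ (r/2) * nrmSq k ^ (r/2) * ‖f k‖^2) * (A * nrmSq k ^ (δ/2))^2 := by
          refine mul_le_mul_of_nonneg_left (pow_le_pow_left₀ (hc0 k) hcb 2) ?_
          have := Real.rpow_nonneg (hXpos k).le (r/2)
          positivity
      _ = A^2 * (nrmSq k ^ (r+δ) * ‖f k‖^2) := by
          rw [← hXrδ, ← hXr2 k r, ← hXr2 k δ]; ring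
  have Sbound : (∑' k : Fin 2 → ℤ, ENNReal.ofReal (nrmSq k ^ t * ‖g k (vk k)‖^2))
      ≤ hsQNormSq t Q vk g := by
    refine le_trans (le_of_eq (ENNReal.tsum_eq_add_tsum_ite (0 : Fin 2 → ℤ))) ?_
    unfold hsQNormSq
    refine add_le_add (le_of_eq ?_) ?_
    · have h0 : nrmSq 0 = 1 := by simp [nrmSq]
      rw [h0, Real.one_rpow, one_mul]
    · refine le_trans (le_of_eq ?_)
        (ENNReal.tsum_le_tsum fun k : {k : Fin 2 → ℤ // k ≠ 0} => ENNReal.le_tsum (vk k.1))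
      rw [← tsum_subtype_eq_of_support_subset (s := {k : Fin 2 → ℤ | k ≠ 0})]
      · exact tsum_congr fun x => if_neg x.2
      · intro x hx
        simp only [Function.mem_support] at hx
        by_contra h
        simp only [Set.mem_setOf_eq, not_not] at h
        simp [h] at hx
  have hGsum : ∑' k : Fin 2 → ℤ, G k ^ (2:ℝ) ≤ ENNReal.ofReal ((ε/α)^2) := by
    have h1 : ∀ k : Fin 2 → ℤ, G k ^ (2:ℝ)
        ≤ ENNReal.ofReal (α⁻¹^2) * ENNReal.ofReal (nrmSq k ^ t * ‖g k (vk k)‖^2) := by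
      intro k
      have hu : 0 ≤ nrmSq k ^ (r/2) * (d k * ‖g k (vk k)‖) :=
        mul_nonneg (Real.rpow_nonneg (hXpos k).le _) (mul_nonneg (hd0 k).le (norm_nonneg _))
      have e1 : G k ^ (2:ℝ) = ENNReal.ofReal ((nrmSq k ^ (r/2) * (d k * ‖g k (vk k)‖))^2) := by
        rw [pow2 (G k), ENNReal.ofReal_pow hu]
      rw [e1, ← ENNReal.ofReal_mul (by positivity)]
      refine ENNReal.ofReal_le_ofReal ?_
      have hXs : 0 < nrmSq k ^ s := Real.rpow_pos_of_pos (hXpos k) s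
      have hd_le : d k ≤ α⁻¹ * (nrmSq k ^ s)⁻¹ := by
        rw [hd, ← mul_inv]
        exact inv_anti₀ (by positivity) (by linarith)
      have hsplit : nrmSq k ^ (2*s+t) = nrmSq k ^ s * nrmSq k ^ s * nrmSq k ^ t := by
        rw [← Real.rpow_add (hXpos k), ← Real.rpow_add (hXpos k)]
        congr 1
        ring
      have hr' : nrmSq k ^ r ≤ nrmSq k ^ (2*s+t) :=
        Real.rpow_le_rpow_of_exponent_le (hX1 k) hrts
      calc (nrmSq k ^ (r/2) * (d k * ‖g k (vk k)‖))^2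
          = (nrmSq k ^ (r/2) * nrmSq k ^ (r/2)) * (d k)^2 * ‖g k (vk k)‖^2 := by ring
        _ = nrmSq k ^ r * (d k)^2 * ‖g k (vk k)‖^2 := by rw [hXr2 k r]
        _ ≤ nrmSq k ^ (2*s+t) * (α⁻¹ * (nrmSq k ^ s)⁻¹)^2 * ‖g k (vk k)‖^2 := by
            refine mul_le_mul_of_nonneg_right ?_ (sq_nonneg _)
            exact mul_le_mul hr' (pow_le_pow_left₀ (hd0 k).le hd_le 2) (sq_nonneg _)
              (Real.rpow_nonneg (hXpos k).le _)
        _ = α⁻¹^2 * (nrmSq k ^ t * ‖g k (vk k)‖^2) := by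
            rw [hsplit]
            field_simp
    calc ∑' k : Fin 2 → ℤ, G k ^ (2:ℝ)
        ≤ ∑' k : Fin 2 → ℤ, ENNReal.ofReal (α⁻¹^2)
            * ENNReal.ofReal (nrmSq k ^ t * ‖g k (vk k)‖^2) := ENNReal.tsum_le_tsum h1
      _ = ENNReal.ofReal (α⁻¹^2)
            * ∑' k : Fin 2 → ℤ, ENNReal.ofReal (nrmSq k ^ t * ‖g k (vk k)‖^2) :=
          ENNReal.tsum_mul_left
      _ ≤ ENNReal.ofReal (α⁻¹^2) * ENNReal.ofReal (ε^2) :=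
          by gcongr; exact le_trans Sbound hg
      _ = ENNReal.ofReal ((ε/α)^2) := by
          rw [← ENNReal.ofReal_mul (by positivity)]
          congr 1
          field_simp
  have hNfin : hsNormSq (r+δ) f ≠ ⊤ := hf.ne
  have hFhalf : (∑' k : Fin 2 → ℤ, F k ^ (2:ℝ)) ^ (1/2:ℝ)
      ≤ ENNReal.ofReal (A * ((hsNormSq (r+δ) f) ^ (1/2:ℝ)).toReal) := by
    calc (∑' k : Fin 2 → ℤ, F k ^ (2:ℝ)) ^ (1/2:ℝ)
        ≤ (ENNReal.ofReal (A^2) * hsNormSq (r+δ) f) ^ (1/2:ℝ) :=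
          ENNReal.rpow_le_rpow hFsum (by norm_num)
      _ = ENNReal.ofReal (A^2) ^ (1/2:ℝ) * (hsNormSq (r+δ) f) ^ (1/2:ℝ) :=
          ENNReal.mul_rpow_of_nonneg _ _ (by norm_num)
      _ = ENNReal.ofReal A * ENNReal.ofReal (((hsNormSq (r+δ) f) ^ (1/2:ℝ)).toReal) := by
          congr 1
          · rw [ENNReal.ofReal_rpow_of_pos (by positivity)]
            congr 1
            rw [← Real.rpow_natCast A 2, ← Real.rpow_mul hA.le]
            norm_num
          · rw [ENNReal.ofReal_toReal (ENNReal.rpow_lt_top_of_nonneg (by norm_num) hNfin).ne]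
      _ = ENNReal.ofReal (A * ((hsNormSq (r+δ) f) ^ (1/2:ℝ)).toReal) :=
          (ENNReal.ofReal_mul hA.le).symm
  have hGhalf : (∑' k : Fin 2 → ℤ, G k ^ (2:ℝ)) ^ (1/2:ℝ) ≤ ENNReal.ofReal (ε/α) := by
    calc (∑' k : Fin 2 → ℤ, G k ^ (2:ℝ)) ^ (1/2:ℝ)
        ≤ (ENNReal.ofReal ((ε/α)^2)) ^ (1/2:ℝ) := ENNReal.rpow_le_rpow hGsum (by norm_num)
      _ = ENNReal.ofReal (ε/α) := by
          rw [ENNReal.ofReal_rpow_of_pos (by positivity)]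
          congr 1
          rw [← Real.rpow_natCast (ε/α) 2, ← Real.rpow_mul (by positivity)]
          norm_num
  calc (hsNormSq r b) ^ (1/2:ℝ)
      ≤ (∑' k : Fin 2 → ℤ, (F k + G k) ^ (2:ℝ)) ^ (1/2:ℝ) :=
        ENNReal.rpow_le_rpow step1 (by norm_num)
    _ ≤ (∑' k : Fin 2 → ℤ, F k ^ (2:ℝ)) ^ (1/2:ℝ)
          + (∑' k : Fin 2 → ℤ, G k ^ (2:ℝ)) ^ (1/2:ℝ) := mink
    _ ≤ ENNReal.ofReal (A * ((hsNormSq (r+δ) f) ^ (1/2:ℝ)).toReal) + ENNReal.ofReal (ε/α) :=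
        add_le_add hFhalf hGhalf
    _ = ENNReal.ofReal (A * ((hsNormSq (r+δ) f) ^ (1/2:ℝ)).toReal + ε/α) :=
        (ENNReal.ofReal_add (by positivity) (div_nonneg hε.le hα1.le)).symm
end
end

section
/- Let f ∈ L¹(𝕋ⁿ), let v₁, …, v_d ∈ ℤⁿ be linearly independent, and let k ∈ ℤⁿ. Then R f ∈ L¹(𝕋ⁿ) and \widehat{R f}(k) = f̂(k) if k·vᵢ = 0 for all i = 1, …, d, while \widehat{R f}(k) = 0 otherwise. -/
noncomputable section
open MeasureTheory Real
open scoped ENNReal NNReal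

/-- The `d`-plane Radon transform on `𝕋ⁿ` associated to integer vectors `v₁, …, v_d`:
`R f(x) = ∫_{[0,1]^d} f(x + t₁v₁ + ⋯ + t_d v_d) dt`. -/
def radon {n d : ℕ} (v : Fin d → Fin n → ℤ) (f : Torus n → ℂ) (x : Torus n) : ℂ :=
  ∫ t in Set.Icc (0 : Fin d → ℝ) 1, f (x + tmap fun i => ∑ j, t j * (v j i : ℝ))

namespace RadonAux

instance : IsProbabilityMeasure (volume : Measure (AddCircle (1:ℝ))) :=
  ⟨by rw [AddCircle.measure_univ]; norm_num⟩

lemma continuous_tmap {n : ℕ} : Continuous (tmap (n := n)) :=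
  continuous_pi fun i => continuous_quotient_mk'.comp (continuous_apply i)

/-- The map `t ↦ π(∑ⱼ tⱼ vⱼ)`. -/
def tau {n d : ℕ} (v : Fin d → Fin n → ℤ) (t : Fin d → ℝ) : Torus n :=
  tmap fun i => ∑ j, t j * (v j i : ℝ)

lemma continuous_tau {n d : ℕ} (v : Fin d → Fin n → ℤ) : Continuous (tau v) :=
  continuous_tmap.comp (continuous_pi fun _ =>
    continuous_finset_sum _ fun j _ => ((continuous_apply j).mul continuous_const))

lemma char_continuous {n : ℕ} (k : Fin n → ℤ) : Continuous (char k) :=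
  continuous_finset_prod _ fun i _ => (fourier (k i)).continuous.comp (continuous_apply i)

lemma norm_char {n : ℕ} (k : Fin n → ℤ) (x : Torus n) : ‖char k x‖ = 1 := by
  rw [char, norm_prod]
  exact Finset.prod_eq_one fun i _ => Circle.norm_coe _

lemma char_add {n : ℕ} (k : Fin n → ℤ) (x y : Torus n) :
    char k (x + y) = char k x * char k y := by
  rw [char, char, char, ← Finset.prod_mul_distrib]
  exact Finset.prod_congr rfl fun i _ => by
    simp [fourier_apply, smul_add, AddCircle.toCircle_add]

lemma char_neg_neg {n : ℕ} (k : Fin n → ℤ) (y : Torus n) :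
    char (-k) (-y) = char k y := by
  unfold char
  exact Finset.prod_congr rfl fun i _ => by
    simp [fourier_apply, neg_smul_neg]

/-- The reference measure on the cube of parameters. -/
abbrev nu (d : ℕ) : Measure (Fin d → ℝ) := volume.restrict (Set.Icc 0 1)

instance (d : ℕ) : IsProbabilityMeasure (nu d) :=
  ⟨by rw [Measure.restrict_apply_univ, Real.volume_Icc_pi]; simp⟩

lemma meas_shift {n d : ℕ} (v : Fin d → Fin n → ℤ) :
    Measurable (fun p : (Fin d → ℝ) × Torus n => p.2 + tau v p.1) :=
  measurable_snd.add ((continuous_tau v).measurable.comp measurable_fst)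

lemma mp_shift {n d : ℕ} (v : Fin d → Fin n → ℤ) : MeasurePreserving
    (fun p : (Fin d → ℝ) × Torus n => p.2 + tau v p.1) ((nu d).prod volume) volume := by
  refine ⟨meas_shift v, ?_⟩
  ext s hs
  rw [Measure.map_apply (meas_shift v) hs, Measure.prod_apply ((meas_shift v) hs)]
  have : ∀ t : Fin d → ℝ, (Prod.mk t ⁻¹' ((fun p : (Fin d → ℝ) × Torus n => p.2 + tau v p.1) ⁻¹' s))
      = (fun x : Torus n => x + tau v t) ⁻¹' s := fun t => rfl
  simp_rw [this, measure_preimage_add_right]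
  simp

lemma mp_shift' {n d : ℕ} (v : Fin d → Fin n → ℤ) : MeasurePreserving
    (fun p : Torus n × (Fin d → ℝ) => p.1 + tau v p.2) (volume.prod (nu d)) volume :=
  (mp_shift v).comp Measure.measurePreserving_swap

variable {n d : ℕ} {v : Fin d → Fin n → ℤ} {f : Torus n → ℂ}

lemma integrable_shift (v : Fin d → Fin n → ℤ) (hf : Integrable f (volume : Measure (Torus n))) :
    Integrable (fun p : Torus n × (Fin d → ℝ) => f (p.1 + tau v p.2)) (volume.prod (nu d)) :=
  ((mp_shift' v).integrable_comp hf.aestronglyMeasurable).2 hf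

lemma integrable_char_shift (v : Fin d → Fin n → ℤ) (k : Fin n → ℤ)
    (hf : Integrable f (volume : Measure (Torus n))) :
    Integrable (fun p : Torus n × (Fin d → ℝ) => char (-k) p.1 * f (p.1 + tau v p.2))
      (volume.prod (nu d)) :=
  (integrable_shift v hf).bdd_mul
    (((char_continuous (-k)).comp continuous_fst).aestronglyMeasurable)
    (Filter.Eventually.of_forall fun _ => le_of_eq (norm_char _ _))

lemma radon_eq : radon v f = fun x => ∫ t, f (x + tau v t) ∂(nu d) := rfl

lemma radon_integrable (hf : Integrable f (volume : Measure (Torus n))) :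
    Integrable (radon v f) (volume : Measure (Torus n)) := by
  rw [radon_eq]
  exact (integrable_shift v hf).integral_prod_left

lemma fCoeff_radon (hf : Integrable f (volume : Measure (Torus n))) (k : Fin n → ℤ) :
    fCoeff (radon v f) k = (∫ t, char k (tau v t) ∂(nu d)) * fCoeff f k := by
  rw [radon_eq]
  unfold fCoeff
  have h1 : ∀ x : Torus n, char (-k) x * ∫ t, f (x + tau v t) ∂(nu d)
      = ∫ t, char (-k) x * f (x + tau v t) ∂(nu d) := fun x => (integral_const_mul _ _).symm
  simp_rw [h1]
  rw [integral_integral_swap (integrable_char_shift v k hf)]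
  have h2 : ∀ t : Fin d → ℝ, (∫ x, char (-k) x * f (x + tau v t))
      = char k (tau v t) * ∫ x, char (-k) x * f x := by
    intro t
    calc (∫ x, char (-k) x * f (x + tau v t))
        = ∫ x, char (-k) (x + tau v t + -(tau v t)) * f (x + tau v t) := by
          simp only [add_neg_cancel_right]
      _ = ∫ y, char (-k) (y + -(tau v t)) * f y :=
          integral_add_right_eq_self (fun y => char (-k) (y + -(tau v t)) * f y) (tau v t)
      _ = char k (tau v t) * ∫ x, char (-k) x * f x := by
          simp_rw [char_add, char_neg_neg, mul_comm (char (-k) _) (char k (tau v t)), mul_assoc]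
          rw [integral_const_mul]
  simp_rw [h2]
  rw [integral_mul_const]

lemma char_tau (v : Fin d → Fin n → ℤ) (k : Fin n → ℤ) (t : Fin d → ℝ) :
    char k (tau v t) = ∏ j, Complex.exp (2 * π * Complex.I * ((∑ i, k i * v j i : ℤ) : ℂ) * t j) := by
  unfold char tau tmap
  simp only [fourier_coe_apply, Complex.ofReal_one, div_one]
  rw [← Complex.exp_sum, ← Complex.exp_sum]
  congr 1
  push_cast
  simp_rw [Finset.mul_sum, Finset.sum_mul]
  rw [Finset.sum_comm]
  exact Finset.sum_congr rfl fun j _ => Finset.sum_congr rfl fun i _ => by ring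

lemma indicator_pi_prod {d : ℕ} (g : Fin d → ℝ → ℂ) (t : Fin d → ℝ) :
    (Set.Icc (0:Fin d → ℝ) 1).indicator (fun t => ∏ j, g j (t j)) t
    = ∏ j, (Set.Icc (0:ℝ) 1).indicator (g j) (t j) := by
  by_cases h : t ∈ Set.Icc (0:Fin d → ℝ) 1
  · rw [Set.indicator_of_mem h]
    refine Finset.prod_congr rfl fun j _ => (Set.indicator_of_mem ?_ _).symm
    rw [← Set.pi_univ_Icc] at h
    exact h j (Set.mem_univ j)
  · rw [Set.indicator_of_notMem h]
    rw [← Set.pi_univ_Icc, Set.mem_pi] at h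
    push_neg at h
    obtain ⟨j, _, hj⟩ := h
    exact (Finset.prod_eq_zero (Finset.mem_univ j) (Set.indicator_of_notMem hj _)).symm

lemma exp_int_integral (m : ℤ) :
    ∫ s in Set.Icc (0:ℝ) 1, Complex.exp (2 * π * Complex.I * (m : ℂ) * s)
      = if m = 0 then 1 else 0 := by
  rw [MeasureTheory.integral_Icc_eq_integral_Ioc, ← intervalIntegral.integral_of_le zero_le_one]
  by_cases hm : m = 0
  · simp [hm]
  · rw [if_neg hm]
    have hc : (2 * (π:ℂ) * Complex.I * (m:ℂ)) ≠ 0 := by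
      simp [Real.pi_ne_zero, Complex.I_ne_zero, hm]
    rw [integral_exp_mul_complex hc]
    rw [Complex.ofReal_one, Complex.ofReal_zero, mul_one, mul_zero, Complex.exp_zero,
      show (2 * (π:ℂ) * Complex.I * (m:ℂ)) = (m:ℂ) * (2 * π * Complex.I) by ring,
      Complex.exp_int_mul_two_pi_mul_I]
    simp

lemma integral_char_tau (v : Fin d → Fin n → ℤ) (k : Fin n → ℤ) :
    ∫ t, char k (tau v t) ∂(nu d)
      = ∏ j, (if (∑ i, k i * v j i : ℤ) = 0 then (1:ℂ) else 0) := by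
  simp_rw [char_tau v k]
  rw [show (∫ t in Set.Icc (0 : Fin d → ℝ) 1,
        ∏ j, Complex.exp (2 * π * Complex.I * ((∑ i, k i * v j i : ℤ) : ℂ) * t j))
      = ∫ t, (Set.Icc (0:Fin d → ℝ) 1).indicator
        (fun t => ∏ j, Complex.exp (2 * π * Complex.I * ((∑ i, k i * v j i : ℤ) : ℂ) * t j)) t
      from (MeasureTheory.integral_indicator measurableSet_Icc).symm]
  simp_rw [indicator_pi_prod (fun j s => Complex.exp (2 * π * Complex.I * ((∑ i, k i * v j i : ℤ) : ℂ) * s))]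
  rw [MeasureTheory.integral_fintype_prod_volume_eq_prod
    (f := fun j s => (Set.Icc (0:ℝ) 1).indicator
      (fun s => Complex.exp (2 * π * Complex.I * ((∑ i, k i * v j i : ℤ) : ℂ) * s)) s)]
  exact Finset.prod_congr rfl fun j _ => by
    rw [MeasureTheory.integral_indicator measurableSet_Icc]
    exact exp_int_integral _

end RadonAux

open RadonAux

theorem radon_integrable_and_fourierCoeff
    (n d : ℕ) (hn : 2 ≤ n) (hd1 : 1 ≤ d) (hd2 : d ≤ n - 1)
    (f : Torus n → ℂ) (hf : Integrable f (volume : Measure (Torus n)))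
    (v : Fin d → Fin n → ℤ) (hv : LinearIndependent ℤ v) (k : Fin n → ℤ) :
    Integrable (radon v f) (volume : Measure (Torus n)) ∧
    ((∀ j, ∑ i, k i * v j i = 0) → fCoeff (radon v f) k = fCoeff f k) ∧
    (¬ (∀ j, ∑ i, k i * v j i = 0) → fCoeff (radon v f) k = 0) := by
  refine ⟨radon_integrable hf, ?_, ?_⟩
  · intro h
    rw [fCoeff_radon hf k, integral_char_tau]
    rw [Finset.prod_congr rfl fun j _ => if_pos (h j)]
    simp
  · intro h
    push_neg at h
    obtain ⟨j, hj⟩ := h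
    rw [fCoeff_radon hf k, integral_char_tau]
    rw [Finset.prod_eq_zero (Finset.mem_univ j) (if_neg hj : _ = (0:ℂ)), zero_mul]
end
end

section
/- Let f ∈ L¹(𝕋ⁿ), and let v₁, …, v_d ∈ ℤⁿ and u₁, …, u_d ∈ ℤⁿ be two linearly independent families that span the same d-dimensional ℚ-linear subspace of ℚⁿ. Then the d-plane Radon transforms computed with the two families agree: R f computed with v₁, …, v_d equals R f computed with u₁, …, u_d almost everywhere on 𝕋ⁿ. -/
noncomputable section
open MeasureTheory Real
open scoped ENNReal NNReal

namespace RadonWD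

instance : IsProbabilityMeasure (volume : Measure (AddCircle (1:ℝ))) :=
  ⟨by simp⟩

variable {n d : ℕ}

/-- The group homomorphism `𝕋ᵈ → 𝕋ⁿ` induced by an integer matrix. -/
def lmap (v : Fin d → Fin n → ℤ) (y : Torus d) : Torus n := fun i => ∑ j, v j i • y j

lemma continuous_lmap (v : Fin d → Fin n → ℤ) : Continuous (lmap v) :=
  continuous_pi fun i => continuous_finset_sum _ fun j _ =>
    (continuous_zsmul (v j i)).comp (continuous_apply j)

lemma measurable_lmap (v : Fin d → Fin n → ℤ) : Measurable (lmap v) :=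
  (continuous_lmap v).measurable

lemma lmap_add (v : Fin d → Fin n → ℤ) (y z : Torus d) :
    lmap v (y + z) = lmap v y + lmap v z := by
  funext i
  simp [lmap, smul_add, Finset.sum_add_distrib]

lemma measurable_tmap : Measurable (tmap (n := d)) :=
  measurable_pi_iff.mpr fun i =>
    (AddCircle.measurePreserving_mk 1 0).measurable.comp (measurable_pi_apply i)

lemma pi_restrict_box :
    (volume : Measure (Fin d → ℝ)).restrict (Set.pi Set.univ fun _ => Set.Ioc (0:ℝ) 1)
      = Measure.pi fun _ => (volume : Measure ℝ).restrict (Set.Ioc 0 1) := by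
  refine (Measure.pi_eq (μ := fun _ : Fin d => (volume : Measure ℝ).restrict (Set.Ioc 0 1))
    fun s hs => ?_).symm
  rw [Measure.restrict_apply (MeasurableSet.univ_pi hs), ← Set.pi_inter_distrib,
    volume_pi_pi]
  simp [Measure.restrict_apply (hs _)]

lemma icc_ae_box :
    (Set.Icc (0 : Fin d → ℝ) 1 : Set (Fin d → ℝ))
      =ᵐ[(volume : Measure (Fin d → ℝ))] Set.pi Set.univ fun _ => Set.Ioc (0:ℝ) 1 := by
  rw [MeasureTheory.ae_eq_set]
  have hsub : Set.pi Set.univ (fun _ : Fin d => Set.Ioc (0:ℝ) 1) ⊆ Set.Icc 0 1 := by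
    intro x hx
    rw [Set.mem_Icc]
    constructor <;> intro i
    · exact (hx i (Set.mem_univ i)).1.le
    · exact (hx i (Set.mem_univ i)).2
  constructor
  · have hnull : (volume : Measure (Fin d → ℝ)) (⋃ i, {x : Fin d → ℝ | x i = 0}) = 0 := by
      refine measure_iUnion_null fun i => ?_
      rw [volume_pi]
      exact Measure.pi_hyperplane _ i 0
    refine measure_mono_null ?_ hnull
    intro x hx
    obtain ⟨hx1, hx2⟩ := hx
    rw [Set.mem_Icc] at hx1
    have hex : ∃ i, x i ∉ Set.Ioc (0:ℝ) 1 := by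
      by_contra hcon
      push_neg at hcon
      exact hx2 fun i _ => hcon i
    obtain ⟨i, hi⟩ := hex
    have h0 : (0:ℝ) ≤ x i := hx1.1 i
    have h1 : x i ≤ 1 := hx1.2 i
    have hx0 : x i = 0 := by
      rcases lt_or_eq_of_le h0 with hlt | heq
      · exact absurd ⟨hlt, h1⟩ hi
      · exact heq.symm
    exact Set.mem_iUnion.mpr ⟨i, hx0⟩
  · rw [Set.diff_eq_empty.mpr hsub]
    exact measure_empty

lemma map_tmap :
    Measure.map (tmap (n := d)) ((volume : Measure (Fin d → ℝ)).restrict (Set.Icc 0 1))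
      = (volume : Measure (Torus d)) := by
  rw [Measure.restrict_congr_set icc_ae_box, pi_restrict_box]
  have hmp : MeasurePreserving (tmap (n := d))
      (Measure.pi fun _ => (volume : Measure ℝ).restrict (Set.Ioc 0 1))
      (Measure.pi fun _ => (volume : Measure (AddCircle (1:ℝ)))) := by
    have := measurePreserving_pi (fun _ : Fin d => (volume : Measure ℝ).restrict (Set.Ioc 0 1))
      (fun _ : Fin d => (volume : Measure (AddCircle (1:ℝ))))
      (f := fun _ : Fin d => ((↑) : ℝ → AddCircle (1:ℝ))) ?_
    · exact this
    · intro i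
      have := AddCircle.measurePreserving_mk (1:ℝ) 0
      rwa [zero_add] at this
  rw [hmp.map_eq, ← volume_pi]

lemma radon_eq (v : Fin d → Fin n → ℤ) {f : Torus n → ℂ} (hf : StronglyMeasurable f)
    (x : Torus n) :
    radon v f x = ∫ y : Torus d, f (x + lmap v y) := by
  have hcast : ∀ t : Fin d → ℝ,
      (tmap fun i => ∑ j, t j * (v j i : ℝ)) = lmap v (tmap t) := by
    intro t; funext i
    show ((∑ j, t j * (v j i : ℝ) : ℝ) : AddCircle (1:ℝ)) = ∑ j, v j i • ((t j : ℝ) : AddCircle (1:ℝ))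
    have h1 : ∀ j : Fin d, t j * (v j i : ℝ) = (v j i) • t j := fun j => by
      rw [zsmul_eq_mul, mul_comm]
    simp_rw [h1]
    rw [show ((∑ j, (v j i) • t j : ℝ) : AddCircle (1:ℝ))
        = ∑ j, (((v j i) • t j : ℝ) : AddCircle (1:ℝ)) from
      map_sum (QuotientAddGroup.mk' (AddSubgroup.zmultiples (1:ℝ))) _ _]
    exact Finset.sum_congr rfl fun j _ => AddCircle.coe_zsmul (1:ℝ)
  have hcont : Continuous fun y : Torus d => x + lmap v y :=
    continuous_const.add (continuous_lmap v)
  have hg : AEStronglyMeasurable (fun y : Torus d => f (x + lmap v y))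
      (Measure.map (tmap (n := d)) ((volume : Measure (Fin d → ℝ)).restrict (Set.Icc 0 1))) := by
    rw [map_tmap]
    exact (hf.comp_measurable hcont.measurable).aestronglyMeasurable
  calc radon v f x = ∫ t in Set.Icc (0 : Fin d → ℝ) 1, f (x + lmap v (tmap t)) := by
        unfold radon; simp_rw [hcast]
    _ = ∫ y, f (x + lmap v y)
        ∂(Measure.map (tmap (n := d)) ((volume : Measure (Fin d → ℝ)).restrict (Set.Icc 0 1))) :=
        (integral_map measurable_tmap.aemeasurable hg).symm
    _ = ∫ y : Torus d, f (x + lmap v y) := by rw [map_tmap]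

lemma exists_int_rel {w : Fin n → ℤ} {v : Fin d → Fin n → ℤ}
    (h : (fun i => (w i : ℚ)) ∈
      Submodule.span ℚ (Set.range (fun j => fun i => (v j i : ℚ)))) :
    ∃ (q : ℤ) (p : Fin d → ℤ), q ≠ 0 ∧ ∀ i, q * w i = ∑ k, p k * v k i := by
  classical
  obtain ⟨c, hc⟩ := (Submodule.mem_span_range_iff_exists_fun ℚ).mp h
  set q : ℤ := ∏ k, ((c k).den : ℤ) with hqdef
  have hq0 : q ≠ 0 := by
    refine Finset.prod_ne_zero_iff.mpr fun k _ => ?_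
    exact_mod_cast (c k).den_nz
  have key : ∀ k : Fin d, ∃ m : ℤ, (q : ℚ) * c k = (m : ℚ) := by
    intro k
    obtain ⟨m, hm⟩ : ((c k).den : ℤ) ∣ q := Finset.dvd_prod_of_mem _ (Finset.mem_univ k)
    refine ⟨(c k).num * m, ?_⟩
    have hden0 : ((c k).den : ℚ) ≠ 0 := by exact_mod_cast (c k).den_nz
    have h1 : ((c k).num : ℚ) / ((c k).den : ℚ) * ((c k).den : ℚ) = ((c k).num : ℚ) :=
      div_mul_cancel₀ _ hden0
    rw [Rat.num_div_den] at h1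
    have : (q : ℚ) = ((c k).den : ℚ) * (m : ℚ) := by exact_mod_cast congrArg (Int.cast : ℤ → ℚ) hm
    rw [this]
    push_cast
    calc ((c k).den : ℚ) * (m : ℚ) * c k = c k * ((c k).den : ℚ) * (m : ℚ) := by ring
      _ = ((c k).num : ℚ) * (m : ℚ) := by rw [h1]
  choose p hp using key
  refine ⟨q, p, hq0, fun i => ?_⟩
  have hci : (w i : ℚ) = ∑ k, c k * (v k i : ℚ) := by
    have := congrFun hc i
    simpa [Finset.sum_apply, smul_eq_mul] using this.symm
  have : (q : ℚ) * (w i : ℚ) = ∑ k, (p k : ℚ) * (v k i : ℚ) := by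
    rw [hci, Finset.mul_sum]
    refine Finset.sum_congr rfl fun k _ => ?_
    rw [← mul_assoc, hp k]
  exact_mod_cast this

lemma absorb (v w : Fin d → Fin n → ℤ) {f : Torus n → ℂ} (hf : StronglyMeasurable f)
    (h : ∀ j, (fun i => (w j i : ℚ)) ∈
      Submodule.span ℚ (Set.range (fun j => fun i => (v j i : ℚ))))
    (x : Torus n) :
    ∫ z : Torus d, ∫ y : Torus d, f (x + lmap w z + lmap v y)
      = ∫ y : Torus d, f (x + lmap v y) := by
  classical
  choose q p hq hrel using fun j => exists_int_rel (h j)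
  set φ : Torus d → Torus d := fun z j => q j • z j with hφdef
  have hφ : MeasurePreserving φ (volume : Measure (Torus d)) volume :=
    volume_preserving_pi fun j => Measure.measurePreserving_zsmul volume (hq j)
  set ψ : Torus d → Torus d := fun z k => ∑ j, p j k • z j with hψdef
  have hkey : ∀ z : Torus d, lmap w (φ z) = lmap v (ψ z) := by
    intro z; funext i
    calc lmap w (φ z) i = ∑ j, (w j i * q j) • z j := by
          simp [lmap, hφdef, smul_smul]
      _ = ∑ j, (∑ k, p j k * v k i) • z j := by
          refine Finset.sum_congr rfl fun j _ => ?_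
          rw [mul_comm, hrel j i]
      _ = ∑ j, ∑ k, (v k i * p j k) • z j := by
          refine Finset.sum_congr rfl fun j _ => ?_
          rw [Finset.sum_smul]
          exact Finset.sum_congr rfl fun k _ => by rw [mul_comm]
      _ = ∑ k, ∑ j, (v k i * p j k) • z j := Finset.sum_comm
      _ = lmap v (ψ z) i := by
          simp [lmap, hψdef, Finset.smul_sum, smul_smul]
  have hcont : Continuous fun zy : Torus d × Torus d =>
      x + lmap w zy.1 + lmap v zy.2 :=
    (continuous_const.add ((continuous_lmap w).comp continuous_fst)).add
      ((continuous_lmap v).comp continuous_snd)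
  have hF : StronglyMeasurable
      (fun z : Torus d => ∫ y : Torus d, f (x + lmap w z + lmap v y)) := by
    refine MeasureTheory.StronglyMeasurable.integral_prod_right
      (f := fun z y => f (x + lmap w z + lmap v y)) ?_
    exact hf.comp_measurable hcont.measurable
  calc ∫ z : Torus d, ∫ y : Torus d, f (x + lmap w z + lmap v y)
      = ∫ z : Torus d, ∫ y : Torus d, f (x + lmap w (φ z) + lmap v y) := by
        have h0 := integral_map (φ := φ) (μ := (volume : Measure (Torus d)))
          (f := fun z => ∫ y : Torus d, f (x + lmap w z + lmap v y))
          hφ.aemeasurable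
          (by rw [hφ.map_eq]; exact hF.aestronglyMeasurable)
        rw [hφ.map_eq] at h0
        exact h0
    _ = ∫ z : Torus d, ∫ y : Torus d, f (x + lmap v y) := by
        refine integral_congr_ae (Filter.Eventually.of_forall fun z => ?_)
        have h2 := integral_add_left_eq_self (μ := (volume : Measure (Torus d)))
          (fun y => f (x + lmap v y)) (ψ z)
        calc ∫ y : Torus d, f (x + lmap w (φ z) + lmap v y)
            = ∫ y : Torus d, f (x + lmap v (ψ z + y)) := by
              simp_rw [hkey z, lmap_add, add_assoc]
          _ = ∫ y : Torus d, f (x + lmap v y) := h2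
    _ = ∫ y : Torus d, f (x + lmap v y) := by
        rw [integral_const]
        simp

lemma radon_congr (v : Fin d → Fin n → ℤ) {f g : Torus n → ℂ}
    (h : f =ᵐ[(volume : Measure (Torus n))] g) :
    radon v f =ᵐ[(volume : Measure (Torus n))] radon v g := by
  set ψ : (Fin d → ℝ) → Torus n := fun t => tmap fun i => ∑ j, t j * (v j i : ℝ) with hψdef
  have hψm : Measurable ψ :=
    measurable_tmap.comp <| measurable_pi_iff.mpr fun i =>
      Finset.measurable_sum _ fun j _ => (measurable_pi_apply j).mul_const _
  set S : Set (Torus n) := toMeasurable volume {a | f a ≠ g a} with hSdef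
  have hSsub : {a | f a ≠ g a} ⊆ S := subset_toMeasurable _ _
  have hSmeas : MeasurableSet S := measurableSet_toMeasurable _ _
  have hS0 : volume S = 0 := by
    rw [hSdef, measure_toMeasurable]
    exact h
  set μr : Measure (Fin d → ℝ) := (volume : Measure (Fin d → ℝ)).restrict (Set.Icc 0 1) with hμr
  have haddm : Measurable fun p : Torus n × (Fin d → ℝ) => p.1 + ψ p.2 := by
    refine measurable_pi_iff.mpr fun i => Measurable.add ?_ ?_
    · exact (measurable_pi_apply i).comp measurable_fst
    · exact ((measurable_pi_apply i).comp hψm).comp measurable_snd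
  have hind : Measurable fun p : Torus n × (Fin d → ℝ) =>
      S.indicator (fun _ => (1 : ℝ≥0∞)) (p.1 + ψ p.2) :=
    (measurable_one.indicator hSmeas).comp haddm
  have key : ∫⁻ x, ∫⁻ t, S.indicator (fun _ => (1:ℝ≥0∞)) (x + ψ t) ∂μr ∂volume = 0 := by
    rw [lintegral_lintegral_swap hind.aemeasurable]
    have inner : ∀ t : Fin d → ℝ,
        ∫⁻ x, S.indicator (fun _ => (1:ℝ≥0∞)) (x + ψ t) ∂(volume : Measure (Torus n)) = 0 := by
      intro t
      have hco : ∀ x : Torus n, x + ψ t = ψ t + x := fun x => add_comm _ _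
      simp_rw [hco]
      calc ∫⁻ x, S.indicator (fun _ => (1:ℝ≥0∞)) (ψ t + x) ∂(volume : Measure (Torus n))
          = ∫⁻ x, S.indicator (fun _ => (1:ℝ≥0∞)) x ∂(volume : Measure (Torus n)) :=
            lintegral_add_left_eq_self _ (ψ t)
        _ = volume S := lintegral_indicator_one hSmeas
        _ = 0 := hS0
    simp_rw [inner]
    simp
  have hmeasx : Measurable fun x : Torus n =>
      ∫⁻ t, S.indicator (fun _ => (1:ℝ≥0∞)) (x + ψ t) ∂μr :=
    hind.lintegral_prod_right'
  have hae : ∀ᵐ x ∂(volume : Measure (Torus n)),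
      ∫⁻ t, S.indicator (fun _ => (1:ℝ≥0∞)) (x + ψ t) ∂μr = 0 :=
    (lintegral_eq_zero_iff hmeasx).mp key
  filter_upwards [hae] with x hx
  have hmt : Measurable fun t : Fin d → ℝ =>
      S.indicator (fun _ => (1:ℝ≥0∞)) (x + ψ t) :=
    (measurable_one.indicator hSmeas).comp (measurable_const.add hψm)
  have h2 : ∀ᵐ t ∂μr, S.indicator (fun _ => (1:ℝ≥0∞)) (x + ψ t) = 0 :=
    (lintegral_eq_zero_iff hmt).mp hx
  have h3 : ∀ᵐ t ∂μr, f (x + ψ t) = g (x + ψ t) := by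
    filter_upwards [h2] with t ht
    by_contra hne
    have hmem : x + ψ t ∈ S := hSsub hne
    rw [Set.indicator_of_mem hmem] at ht
    exact one_ne_zero ht
  exact integral_congr_ae h3

lemma fubini_ae (v w : Fin d → Fin n → ℤ) {f : Torus n → ℂ}
    (hsm : StronglyMeasurable f) (hint : Integrable f (volume : Measure (Torus n))) :
    ∀ᵐ x ∂(volume : Measure (Torus n)),
      Integrable (fun zy : Torus d × Torus d => f (x + lmap w zy.1 + lmap v zy.2))
        ((volume : Measure (Torus d)).prod volume) := by
  have hcont : ∀ x : Torus n, Continuous fun zy : Torus d × Torus d =>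
      x + lmap w zy.1 + lmap v zy.2 := fun x =>
    (continuous_const.add ((continuous_lmap w).comp continuous_fst)).add
      ((continuous_lmap v).comp continuous_snd)
  have hmove : Measurable fun p : Torus n × (Torus d × Torus d) =>
      p.1 + lmap w p.2.1 + lmap v p.2.2 := by
    refine measurable_pi_iff.mpr fun i => ?_
    refine Measurable.add (Measurable.add ?_ ?_) ?_
    · exact (measurable_pi_apply i).comp measurable_fst
    · exact ((measurable_pi_apply i).comp (measurable_lmap w)).comp
        (measurable_fst.comp measurable_snd)
    · exact ((measurable_pi_apply i).comp (measurable_lmap v)).comp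
        (measurable_snd.comp measurable_snd)
  have hmeas2 : Measurable fun p : Torus n × (Torus d × Torus d) =>
      (‖f (p.1 + lmap w p.2.1 + lmap v p.2.2)‖₊ : ℝ≥0∞) :=
    (hsm.measurable.comp hmove).nnnorm.coe_nnreal_ennreal
  have key : ∫⁻ x, ∫⁻ zy : Torus d × Torus d,
      (‖f (x + lmap w zy.1 + lmap v zy.2)‖₊ : ℝ≥0∞)
      ∂((volume : Measure (Torus d)).prod volume) ∂(volume : Measure (Torus n)) ≠ ⊤ := by
    rw [lintegral_lintegral_swap hmeas2.aemeasurable]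
    have inner : ∀ zy : Torus d × Torus d,
        ∫⁻ x, (‖f (x + lmap w zy.1 + lmap v zy.2)‖₊ : ℝ≥0∞) ∂(volume : Measure (Torus n))
          = ∫⁻ a, (‖f a‖₊ : ℝ≥0∞) ∂(volume : Measure (Torus n)) := by
      intro zy
      have hcomm : ∀ x : Torus n, x + lmap w zy.1 + lmap v zy.2
          = (lmap w zy.1 + lmap v zy.2) + x := fun x => by abel
      simp_rw [hcomm]
      exact lintegral_add_left_eq_self (μ := (volume : Measure (Torus n)))
        (fun a => (‖f a‖₊ : ℝ≥0∞)) _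
    simp_rw [inner]
    rw [lintegral_const]
    have hfin := hint.2
    rw [hasFiniteIntegral_def] at hfin
    simp only [measure_univ, mul_one]
    exact hfin.ne
  have hmx : Measurable fun x : Torus n => ∫⁻ zy : Torus d × Torus d,
      (‖f (x + lmap w zy.1 + lmap v zy.2)‖₊ : ℝ≥0∞)
      ∂((volume : Measure (Torus d)).prod volume) :=
    hmeas2.lintegral_prod_right'
  have hae := ae_lt_top hmx key
  filter_upwards [hae] with x hx
  refine ⟨(hsm.comp_measurable (hcont x).measurable).aestronglyMeasurable, ?_⟩
  rw [hasFiniteIntegral_def]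
  exact hx

end RadonWD

theorem radon_well_defined_on_Grassmannian
    (n d : ℕ) (hn : 2 ≤ n) (hd1 : 1 ≤ d) (hd2 : d ≤ n - 1)
    (f : Torus n → ℂ) (hf : Integrable f (volume : Measure (Torus n)))
    (v u : Fin d → Fin n → ℤ)
    (hv : LinearIndependent ℚ (fun j => fun i => (v j i : ℚ)))
    (hu : LinearIndependent ℚ (fun j => fun i => (u j i : ℚ)))
    (hspan : Submodule.span ℚ (Set.range (fun j => fun i => (v j i : ℚ)))
      = Submodule.span ℚ (Set.range (fun j => fun i => (u j i : ℚ)))) :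
    radon v f =ᵐ[(volume : Measure (Torus n))] radon u f := by
  classical
  open RadonWD in
  have hfm := hf.1
  set g : Torus n → ℂ := hfm.mk f with hgdef
  have hgsm : StronglyMeasurable g := hfm.stronglyMeasurable_mk
  have hfg : f =ᵐ[(volume : Measure (Torus n))] g := hfm.ae_eq_mk
  have hgint : Integrable g (volume : Measure (Torus n)) := hf.congr hfg
  have h1 : radon v f =ᵐ[(volume : Measure (Torus n))] radon v g := radon_congr v hfg
  have h2 : radon u f =ᵐ[(volume : Measure (Torus n))] radon u g := radon_congr u hfg
  refine h1.trans (Filter.EventuallyEq.trans ?_ h2.symm)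
  have hvu : ∀ j, (fun i => (u j i : ℚ)) ∈
      Submodule.span ℚ (Set.range (fun j => fun i => (v j i : ℚ))) := by
    intro j
    rw [hspan]
    exact Submodule.subset_span ⟨j, rfl⟩
  have huv : ∀ j, (fun i => (v j i : ℚ)) ∈
      Submodule.span ℚ (Set.range (fun j => fun i => (u j i : ℚ))) := by
    intro j
    rw [← hspan]
    exact Submodule.subset_span ⟨j, rfl⟩
  have hae := fubini_ae v u hgsm hgint
  filter_upwards [hae] with x hx
  rw [radon_eq v hgsm x, radon_eq u hgsm x]
  calc ∫ y : Torus d, g (x + lmap v y)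
      = ∫ z : Torus d, ∫ y : Torus d, g (x + lmap u z + lmap v y) :=
        (absorb v u hgsm hvu x).symm
    _ = ∫ y : Torus d, ∫ z : Torus d, g (x + lmap u z + lmap v y) :=
        integral_integral_swap hx
    _ = ∫ y : Torus d, ∫ z : Torus d, g (x + lmap v y + lmap u z) := by
        simp_rw [add_right_comm]
    _ = ∫ z : Torus d, g (x + lmap u z) :=
        absorb u v hgsm huv x
end
end

section
/- Let s ∈ ℝ and let w : ℤⁿ × Gr(d,n) → (0,∞) satisfy Σ_{A ∈ Ω_k} w(k,A)² ≤ C_w² and W_k := Σ_{A ∈ Ω_k} w(k,A)² ≥ c_w² for all k ∈ ℤⁿ, for some constants C_w, c_w > 0. For a sequence g : ℤⁿ × Gr(d,n) → ℂ with ‖g‖²_{L_s^{2,2}} := Σ_{A ∈ Gr(d,n)} Σ_{k ∈ ℤⁿ} ⟨k⟩^{2s} w(k,A)² |g(k,A)|² < ∞, define (B g)(k) = W_k^{−1} Σ_{A ∈ Ω_k} w(k,A)² g(k,A). Then B g is well defined (the series converges absolutely for each k) and Σ_{k ∈ ℤⁿ} ⟨k⟩^{2s} |(B g)(k)|² ≤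 c_w^{−2} ‖g‖²_{L_s^{2,2}}; that is, the linear operator F_{W^{−1}} R_d^* : L_s^{2,2}(X_{d,n};w) → H^s(𝕋ⁿ) is (1/c_w)-Lipschitz. -/
noncomputable section
open scoped ENNReal NNReal

/-- The Grassmannian `Gr(d,n)`: `d`-dimensional `ℚ`-linear subspaces of `ℚⁿ`. -/
def Gr (d n : ℕ) : Type := {A : Submodule ℚ (Fin n → ℚ) // Module.finrank ℚ A = d}

/-- `A ∈ Ω_k` iff `k ⊥ A`, i.e. `k·q = 0` for all `q ∈ A`. -/
def perp {n : ℕ} (d : ℕ) (k : Fin n → ℤ) : Set (Gr d n) :=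
  {A | ∀ q ∈ A.1, ∑ i, (k i : ℚ) * q i = 0}

/-- `V` is a basis of integer vectors for `A ∈ Gr(d,n)`. -/
def IsIntBasis {n d : ℕ} (A : Gr d n) (V : Fin d → Fin n → ℤ) : Prop :=
  LinearIndependent ℚ (fun j => fun i => (V j i : ℚ)) ∧
    Submodule.span ℚ (Set.range (fun j => fun i => (V j i : ℚ))) = A.1

/-- `W_k = Σ_{A ∈ Ω_k} w(k,A)²`. -/
def Wk {n : ℕ} (d : ℕ) (w : (Fin n → ℤ) → Gr d n → ℝ) (k : Fin n → ℤ) : ℝ :=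
  (∑' A : perp d k, ENNReal.ofReal (w k A.1 ^ 2)).toReal

/-- `⟨k⟩² = 1 + |k|²` for `k ∈ ℤⁿ`. -/
def nrmSqN {n : ℕ} (k : Fin n → ℤ) : ℝ := 1 + ∑ i, (k i : ℝ)^2

/-- Cauchy–Schwarz for `tsum`. -/
lemma tsum_cs {ι : Type*} (f h : ι → ℝ)
    (hf2 : Summable fun i => f i ^ 2) (hh2 : Summable fun i => h i ^ 2)
    (hfh : Summable fun i => f i * h i) (hfh0 : ∀ i, 0 ≤ f i * h i) :
    (∑' i, f i * h i) ^ 2 ≤ (∑' i, f i ^ 2) * ∑' i, h i ^ 2 := by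
  set P := (∑' i, f i ^ 2) * ∑' i, h i ^ 2 with hPdef
  have hP : 0 ≤ P :=
    mul_nonneg (tsum_nonneg fun i => sq_nonneg _) (tsum_nonneg fun i => sq_nonneg _)
  have key : ∑' i, f i * h i ≤ Real.sqrt P := by
    refine hfh.tsum_le_of_sum_le fun u => ?_
    have h1 : (∑ i ∈ u, f i * h i) ^ 2 ≤ (∑ i ∈ u, f i ^ 2) * ∑ i ∈ u, h i ^ 2 :=
      Finset.sum_mul_sq_le_sq_mul_sq u f h
    have h2 : (∑ i ∈ u, f i ^ 2) * ∑ i ∈ u, h i ^ 2 ≤ P :=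
      mul_le_mul (hf2.sum_le_tsum u (fun i _ => sq_nonneg _))
        (hh2.sum_le_tsum u (fun i _ => sq_nonneg _))
        (Finset.sum_nonneg fun i _ => sq_nonneg _)
        (tsum_nonneg fun i => sq_nonneg _)
    have h0 : 0 ≤ ∑ i ∈ u, f i * h i := Finset.sum_nonneg fun i _ => hfh0 i
    calc ∑ i ∈ u, f i * h i = Real.sqrt ((∑ i ∈ u, f i * h i) ^ 2) := (Real.sqrt_sq h0).symm
      _ ≤ Real.sqrt P := Real.sqrt_le_sqrt (h1.trans h2)
  calc (∑' i, f i * h i) ^ 2 ≤ Real.sqrt P ^ 2 :=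
        pow_le_pow_left₀ (tsum_nonneg hfh0) key 2
    _ = P := Real.sq_sqrt hP

theorem normalized_backprojection_lipschitz
    (n d : ℕ) (hn : 2 ≤ n) (hd1 : 1 ≤ d) (hd2 : d ≤ n - 1) (s : ℝ)
    (w : (Fin n → ℤ) → Gr d n → ℝ) (hw : ∀ k A, 0 < w k A)
    (Cw cw : ℝ) (hCw : 0 < Cw) (hcw : 0 < cw)
    (hsum : ∀ k : Fin n → ℤ,
      ∑' A : perp d k, ENNReal.ofReal (w k A.1 ^ 2) ≤ ENNReal.ofReal (Cw ^ 2))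
    (hlow : ∀ k : Fin n → ℤ,
      ENNReal.ofReal (cw ^ 2) ≤ ∑' A : perp d k, ENNReal.ofReal (w k A.1 ^ 2))
    (g : (Fin n → ℤ) → Gr d n → ℂ)
    (hg : (∑' (A : Gr d n) (k : Fin n → ℤ),
      ENNReal.ofReal (nrmSqN k ^ s * w k A ^ 2 * ‖g k A‖ ^ 2)) < ⊤) :
    (∀ k : Fin n → ℤ, Summable fun A : perp d k => w k A.1 ^ 2 * ‖g k A.1‖) ∧
    ∑' k : Fin n → ℤ,
        ENNReal.ofReal (nrmSqN k ^ s *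
          ‖((Wk d w k : ℂ))⁻¹ * ∑' A : perp d k, (Complex.ofReal (w k A.1 ^ 2)) * g k A.1‖ ^ 2)
      ≤ (ENNReal.ofReal (cw ^ 2))⁻¹ *
          ∑' (A : Gr d n) (k : Fin n → ℤ),
            ENNReal.ofReal (nrmSqN k ^ s * w k A ^ 2 * ‖g k A‖ ^ 2) := by
  have hnrm : ∀ k : Fin n → ℤ, 0 < nrmSqN k ^ s := by
    intro k
    apply Real.rpow_pos_of_pos
    unfold nrmSqN
    positivity
  have hg' : ∀ k : Fin n → ℤ,
      (∑' A : Gr d n, ENNReal.ofReal (nrmSqN k ^ s * w k A ^ 2 * ‖g k A‖ ^ 2)) < ⊤ := by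
    intro k
    rw [ENNReal.tsum_comm] at hg
    exact lt_of_le_of_lt (ENNReal.le_tsum k) hg
  have hperp : ∀ k : Fin n → ℤ,
      (∑' A : perp d k, ENNReal.ofReal (nrmSqN k ^ s * w k A.1 ^ 2 * ‖g k A.1‖ ^ 2)) < ⊤ :=
    fun k => lt_of_le_of_lt
      (ENNReal.tsum_comp_le_tsum_of_injective Subtype.val_injective
        (fun A : Gr d n => ENNReal.ofReal (nrmSqN k ^ s * w k A ^ 2 * ‖g k A‖ ^ 2)))
      (hg' k)
  have key : ∀ k : Fin n → ℤ,
      (Summable fun A : perp d k => w k A.1 ^ 2 * ‖g k A.1‖) ∧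
      ENNReal.ofReal (nrmSqN k ^ s *
          ‖((Wk d w k : ℂ))⁻¹ * ∑' A : perp d k, (Complex.ofReal (w k A.1 ^ 2)) * g k A.1‖ ^ 2)
        ≤ (ENNReal.ofReal (cw ^ 2))⁻¹ *
            ∑' A : perp d k, ENNReal.ofReal (nrmSqN k ^ s * w k A.1 ^ 2 * ‖g k A.1‖ ^ 2) := by
    intro k
    have hc : 0 < nrmSqN k ^ s := hnrm k
    set c : ℝ := nrmSqN k ^ s with hcdef
    -- summability of w²
    have hW2top : (∑' A : perp d k, ENNReal.ofReal (w k A.1 ^ 2)) ≠ ⊤ :=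
      ((hsum k).trans_lt ENNReal.ofReal_lt_top).ne
    have hW2sum : Summable fun A : perp d k => w k A.1 ^ 2 :=
      (ENNReal.summable_toReal hW2top).congr fun A => ENNReal.toReal_ofReal (sq_nonneg _)
    have hWk_eq : Wk d w k = ∑' A : perp d k, w k A.1 ^ 2 := by
      rw [Wk, ← ENNReal.ofReal_tsum_of_nonneg (fun A => sq_nonneg _) hW2sum,
        ENNReal.toReal_ofReal (tsum_nonneg fun A => sq_nonneg _)]
    have hWk_lb : cw ^ 2 ≤ Wk d w k := by
      have h1 := hlow k
      rw [← ENNReal.ofReal_tsum_of_nonneg (fun A => sq_nonneg _) hW2sum] at h1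
      rw [hWk_eq]
      exact (ENNReal.ofReal_le_ofReal_iff (tsum_nonneg fun A => sq_nonneg _)).mp h1
    have hWk_pos : 0 < Wk d w k := lt_of_lt_of_le (by positivity) hWk_lb
    -- summability of w²‖g‖² and w²‖g‖
    have hGtop : (∑' A : perp d k,
        ENNReal.ofReal (c * w k A.1 ^ 2 * ‖g k A.1‖ ^ 2)) ≠ ⊤ := (hperp k).ne
    have hcg : Summable fun A : perp d k => c * w k A.1 ^ 2 * ‖g k A.1‖ ^ 2 :=
      (ENNReal.summable_toReal hGtop).congr fun A =>
        ENNReal.toReal_ofReal (by positivity)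
    have hG2sum : Summable fun A : perp d k => w k A.1 ^ 2 * ‖g k A.1‖ ^ 2 := by
      refine (hcg.mul_left c⁻¹).congr fun A => ?_
      field_simp
    have hsum1 : Summable fun A : perp d k => w k A.1 ^ 2 * ‖g k A.1‖ := by
      refine Summable.of_nonneg_of_le (fun A => by positivity) (fun A => ?_)
        (hW2sum.add hG2sum)
      nlinarith [sq_nonneg (‖g k A.1‖ - 1), sq_nonneg (w k A.1),
        mul_nonneg (sq_nonneg (w k A.1)) (sq_nonneg (‖g k A.1‖ - 1)),
        mul_nonneg (sq_nonneg (w k A.1)) (norm_nonneg (g k A.1))]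
    refine ⟨hsum1, ?_⟩
    -- Cauchy-Schwarz
    have hCS := tsum_cs (fun A : perp d k => w k A.1)
      (fun A : perp d k => w k A.1 * ‖g k A.1‖)
      hW2sum (hG2sum.congr fun A => by ring) (hsum1.congr fun A => by ring)
      (fun A => mul_nonneg (hw k A.1).le (mul_nonneg (hw k A.1).le (norm_nonneg _)))
    have e1 : (∑' A : perp d k, w k A.1 * (w k A.1 * ‖g k A.1‖))
        = ∑' A : perp d k, w k A.1 ^ 2 * ‖g k A.1‖ := tsum_congr fun A => by ring
    have e2 : (∑' A : perp d k, (w k A.1 * ‖g k A.1‖) ^ 2)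
        = ∑' A : perp d k, w k A.1 ^ 2 * ‖g k A.1‖ ^ 2 := tsum_congr fun A => by ring
    rw [e1, e2] at hCS
    set S1 := ∑' A : perp d k, w k A.1 ^ 2 * ‖g k A.1‖ with hS1def
    set Sg := ∑' A : perp d k, w k A.1 ^ 2 * ‖g k A.1‖ ^ 2 with hSgdef
    have hSg0 : 0 ≤ Sg := tsum_nonneg fun A => by positivity
    set W := Wk d w k with hWdef
    rw [← hWk_eq] at hCS
    -- norm of the tsum
    have hnormterm : ∀ A : perp d k,
        ‖(Complex.ofReal (w k A.1 ^ 2)) * g k A.1‖ = w k A.1 ^ 2 * ‖g k A.1‖ := fun A => by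
      rw [norm_mul, Complex.norm_real, Real.norm_eq_abs, abs_of_nonneg (sq_nonneg _)]
    set T := ∑' A : perp d k, (Complex.ofReal (w k A.1 ^ 2)) * g k A.1 with hTdef
    have hTnorm : ‖T‖ ≤ S1 := by
      rw [hTdef, hS1def, ← tsum_congr hnormterm]
      exact norm_tsum_le_tsum_norm (hsum1.congr fun A => (hnormterm A).symm)
    have hT2 : ‖T‖ ^ 2 ≤ S1 ^ 2 := pow_le_pow_left₀ (norm_nonneg _) hTnorm 2
    -- real inequality chain
    have h1 : ‖((W : ℂ))⁻¹ * T‖ ^ 2 = (W⁻¹) ^ 2 * ‖T‖ ^ 2 := by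
      rw [norm_mul, mul_pow, norm_inv, Complex.norm_real, Real.norm_eq_abs,
        abs_of_nonneg hWk_pos.le]
    have h2 : (W⁻¹) ^ 2 * ‖T‖ ^ 2 ≤ (W⁻¹) ^ 2 * (W * Sg) :=
      mul_le_mul_of_nonneg_left (hT2.trans hCS) (by positivity)
    have h3 : (W⁻¹) ^ 2 * (W * Sg) = W⁻¹ * Sg := by
      field_simp
    have h4 : W⁻¹ * Sg ≤ (cw ^ 2)⁻¹ * Sg :=
      mul_le_mul_of_nonneg_right (inv_anti₀ (by positivity) hWk_lb) hSg0
    have hfinal : c * ‖((W : ℂ))⁻¹ * T‖ ^ 2 ≤ (cw ^ 2)⁻¹ * (c * Sg) := by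
      have h5 : ‖((W : ℂ))⁻¹ * T‖ ^ 2 ≤ (cw ^ 2)⁻¹ * Sg := by
        rw [h1]; exact h2.trans (h3.le.trans h4)
      calc c * ‖((W : ℂ))⁻¹ * T‖ ^ 2 ≤ c * ((cw ^ 2)⁻¹ * Sg) :=
            mul_le_mul_of_nonneg_left h5 hc.le
        _ = (cw ^ 2)⁻¹ * (c * Sg) := by ring
    -- pass to ENNReal
    have hofmul : ENNReal.ofReal ((cw ^ 2)⁻¹ * (c * Sg))
        = (ENNReal.ofReal (cw ^ 2))⁻¹ * ENNReal.ofReal (c * Sg) := by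
      rw [ENNReal.ofReal_mul (by positivity), ENNReal.ofReal_inv_of_pos (by positivity)]
    have hcsg : ENNReal.ofReal (c * Sg)
        = ∑' A : perp d k, ENNReal.ofReal (c * w k A.1 ^ 2 * ‖g k A.1‖ ^ 2) := by
      have hmul : c * Sg = ∑' A : perp d k, c * (w k A.1 ^ 2 * ‖g k A.1‖ ^ 2) := by
        rw [hSgdef, tsum_mul_left]
      rw [hmul, ENNReal.ofReal_tsum_of_nonneg (fun A => by positivity)
        (hG2sum.mul_left c)]
      exact tsum_congr fun A => by rw [mul_assoc]
    calc ENNReal.ofReal (c * ‖((W : ℂ))⁻¹ * T‖ ^ 2)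
        ≤ ENNReal.ofReal ((cw ^ 2)⁻¹ * (c * Sg)) := ENNReal.ofReal_le_ofReal hfinal
      _ = (ENNReal.ofReal (cw ^ 2))⁻¹ *
            ∑' A : perp d k, ENNReal.ofReal (c * w k A.1 ^ 2 * ‖g k A.1‖ ^ 2) := by
          rw [hofmul, hcsg]
  refine ⟨fun k => (key k).1, ?_⟩
  calc ∑' k : Fin n → ℤ, ENNReal.ofReal (nrmSqN k ^ s *
          ‖((Wk d w k : ℂ))⁻¹ * ∑' A : perp d k, (Complex.ofReal (w k A.1 ^ 2)) * g k A.1‖ ^ 2)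
      ≤ ∑' k : Fin n → ℤ, (ENNReal.ofReal (cw ^ 2))⁻¹ *
          ∑' A : perp d k, ENNReal.ofReal (nrmSqN k ^ s * w k A.1 ^ 2 * ‖g k A.1‖ ^ 2) :=
        ENNReal.tsum_le_tsum fun k => (key k).2
    _ = (ENNReal.ofReal (cw ^ 2))⁻¹ * ∑' k : Fin n → ℤ,
          ∑' A : perp d k, ENNReal.ofReal (nrmSqN k ^ s * w k A.1 ^ 2 * ‖g k A.1‖ ^ 2) :=
        ENNReal.tsum_mul_left
    _ ≤ (ENNReal.ofReal (cw ^ 2))⁻¹ * ∑' k : Fin n → ℤ,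
          ∑' A : Gr d n, ENNReal.ofReal (nrmSqN k ^ s * w k A ^ 2 * ‖g k A‖ ^ 2) :=
        mul_le_mul' le_rfl (ENNReal.tsum_le_tsum fun k =>
          ENNReal.tsum_comp_le_tsum_of_injective Subtype.val_injective
            (fun A : Gr d n => ENNReal.ofReal (nrmSqN k ^ s * w k A ^ 2 * ‖g k A‖ ^ 2)))
    _ = (ENNReal.ofReal (cw ^ 2))⁻¹ *
          ∑' (A : Gr d n) (k : Fin n → ℤ),
            ENNReal.ofReal (nrmSqN k ^ s * w k A ^ 2 * ‖g k A‖ ^ 2) := by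
        rw [ENNReal.tsum_comm]
end
end
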